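/- arXiv:2010.13324 — 3 statements merged into one kernel-verified Lean document; each statement's English description precedes it below -/
import Mathlib

section
/- For all integers n ≥ 3 and 0 ≤ k ≤ n−2, one has N(n,k) ≥ (n+k−5/2)·N(n−1,k). -/
/-- Odd double factorial: `ddf m` equals `m!!` for odd `m`, and `ddf 0 = 1`
(so that `ddf (2*n - 5)` with truncated subtraction encodes `(2n-5)!!`
with the convention `(-1)!! = 1`). -/
def ddf : ℕ → ℚ
  | 0 => 1
  | 1 => 1
  | n + 2 => (n + 2) * ddf n

/-- `N n k` is the number of one-component galled networks with `n - 1` leaves whose `k`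
reticulation-node children are labeled `1, …, k`, defined by the initial values
`N(n,0) = (2n-5)!!`, `N(n,1) = (n-2)(2n-5)!!` and the Gunawan--Rathin--Zhang recurrence. -/
def N : ℕ → ℕ → ℚ
  | n, 0 => ddf (2 * n - 5)
  | n, 1 => ((n : ℚ) - 2) * ddf (2 * n - 5)
  | n, k + 2 =>
      ((n : ℚ) + (k + 2) - 3) * N n (k + 1) + ((k : ℚ) + 1) * N n k
        + (1 / 2) * ∑ d ∈ Finset.Icc 1 (k + 1),
            (((k + 1).choose d : ℚ)) * ddf (2 * d - 1) *
              (N (n - d) (k + 1 - d) - N (n - d + 1) (k + 1 - d))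
  termination_by n k => k
  decreasing_by all_goals omega

lemma ddf_pos : ∀ m, 0 < ddf m := by
  intro m
  induction m using Nat.strong_induction_on with
  | _ m ih =>
    match m with
    | 0 => norm_num [ddf]
    | 1 => norm_num [ddf]
    | (m+2) => rw [ddf]; have := ih m (by omega); positivity

lemma N_zero_pos (n : ℕ) : 0 < N n 0 := by rw [N]; exact ddf_pos _

lemma N_zero_eq (n : ℕ) (h : 4 ≤ n) : N n 0 = (2*(n:ℚ)-5) * N (n-1) 0 := by
  rw [N, N]
  have h1 : 2*n-5 = (2*(n-1)-5) + 2 := by omega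
  have h2 : (2*(n-1)-5 : ℕ) = 2*n-7 := by omega
  rw [h1, ddf, h2]
  have h3 : ((2*n-7 : ℕ) : ℚ) = 2*(n:ℚ)-7 := by
    push_cast [Nat.cast_sub (by omega : 7 ≤ 2*n)]; ring
  rw [h3]; ring

lemma N_one_eq (n : ℕ) : N n 1 = ((n:ℚ)-2) * N n 0 := by rw [N, N]

def Good (K : ℕ) : Prop :=
  (∀ n : ℕ, K+2 ≤ n → 0 < N n K) ∧
  (∀ n j : ℕ, j+1 = K → K+2 ≤ n → ((n:ℚ)+K-3) * N n j ≤ N n K) ∧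
  (∀ n : ℕ, K+3 ≤ n → 5 ≤ n → (5*((n:ℚ)+K)-10) * N (n-1) K ≤ 4 * N n K) ∧
  (∀ n : ℕ, K+2 ≤ n → (2*((n:ℚ)+K)-5) * N (n-1) K ≤ 2 * N n K)

lemma good0 : Good 0 := by
  refine ⟨fun n hn => N_zero_pos _, fun n j hj => by omega, ?_, ?_⟩
  · intro n h3 h5
    rw [N_zero_eq n (by omega)]
    have hp := (N_zero_pos (n-1)).le
    have h5' : (5:ℚ) ≤ (n:ℚ) := by exact_mod_cast h5
    push_cast
    nlinarith [mul_le_mul_of_nonneg_right (show (5*((n:ℚ))-10) ≤ 4*(2*(n:ℚ)-5) by linarith) hp]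
  · intro n hn
    rcases Nat.lt_or_ge n 4 with h | h
    · interval_cases n
      · show (2*((2:ℚ)+0)-5) * N 1 0 ≤ 2 * N 2 0
        norm_num [N, ddf]
      · show (2*((3:ℚ)+0)-5) * N 2 0 ≤ 2 * N 3 0
        norm_num [N, ddf]
    · rw [N_zero_eq n h]
      have hp := (N_zero_pos (n-1)).le
      have h4 : (4:ℚ) ≤ (n:ℚ) := by exact_mod_cast h
      push_cast
      nlinarith [mul_le_mul_of_nonneg_right (show (2*((n:ℚ))-5) ≤ 2*(2*(n:ℚ)-5) by linarith) hp]

lemma good1 : Good 1 := by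
  have key : ∀ n : ℕ, 4 ≤ n → N n 1 = ((n:ℚ)-2)*(2*(n:ℚ)-5) * N (n-1) 0 := by
    intro n h
    rw [N_one_eq, N_zero_eq n h]; ring
  have keyB : ∀ n : ℕ, 4 ≤ n → N (n-1) 1 = ((n:ℚ)-3) * N (n-1) 0 := by
    intro n h
    rw [N_one_eq]
    have : ((n-1 : ℕ):ℚ) = (n:ℚ)-1 := by
      push_cast [Nat.cast_sub (by omega : 1 ≤ n)]; ring
    rw [this]; ring
  refine ⟨?_, ?_, ?_, ?_⟩
  · intro n hn
    rw [N_one_eq]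
    have h0 := N_zero_pos n
    have h3 : (3:ℚ) ≤ (n:ℚ) := by exact_mod_cast hn
    nlinarith
  · intro n j hj hn
    have hj0 : j = 0 := by omega
    subst hj0
    rw [N_one_eq]
    push_cast
    ring_nf
    rfl
  · intro n h4 h5
    have hn4 : 4 ≤ n := by omega
    rw [key n hn4, keyB n hn4]
    have hp := (N_zero_pos (n-1)).le
    have h5' : (5:ℚ) ≤ (n:ℚ) := by exact_mod_cast h5
    push_cast
    nlinarith [mul_le_mul_of_nonneg_right
      (show (5*((n:ℚ)+1)-10)*((n:ℚ)-3) ≤ 4*(((n:ℚ)-2)*(2*(n:ℚ)-5)) by nlinarith) hp]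
  · intro n hn
    rcases Nat.lt_or_ge n 4 with h | h
    · have h3 : n = 3 := by omega
      subst h3
      show (2*((3:ℚ)+1)-5) * N 2 1 ≤ 2 * N 3 1
      norm_num [N, ddf]
    · rw [key n h, keyB n h]
      have hp := (N_zero_pos (n-1)).le
      have h4 : (4:ℚ) ≤ (n:ℚ) := by exact_mod_cast h
      push_cast
      nlinarith [mul_le_mul_of_nonneg_right
        (show (2*((n:ℚ)+1)-5)*((n:ℚ)-3) ≤ 2*(((n:ℚ)-2)*(2*(n:ℚ)-5)) by nlinarith) hp]

lemma N_decomp (n k : ℕ) (hn : k + 4 ≤ n) (c : ℚ) :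
    N n (k+2) - c * N (n-1) (k+2)
      = (((n:ℚ)+k-1) * N n (k+1) - c*((n:ℚ)+k-2) * N (n-1) (k+1))
        + ((k:ℚ)+1) * (N n k - c * N (n-1) k)
        + (1/2) * ∑ d ∈ Finset.Icc 1 (k+1),
            (((k+1).choose d : ℚ)) * ddf (2*d-1) *
              ((c+1) * N (n-d) (k+1-d) - N (n-d+1) (k+1-d) - c * N (n-d-1) (k+1-d)) := by
  rw [N]
  rw [show N (n-1) (k+2) = ((n-1 : ℕ) : ℚ) * N (n-1) (k+1) + ((k:ℚ)+2-3) * N (n-1) (k+1)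
      + ((k : ℚ) + 1) * N (n-1) k
      + (1 / 2) * ∑ d ∈ Finset.Icc 1 (k + 1),
          (((k + 1).choose d : ℚ)) * ddf (2 * d - 1) *
            (N (n - d - 1) (k + 1 - d) - N (n - d) (k + 1 - d)) from ?_]
  · have hcast : ((n-1 : ℕ) : ℚ) = (n:ℚ) - 1 := by
      push_cast [Nat.cast_sub (by omega : 1 ≤ n)]; ring
    rw [hcast]
    have hsum : ∑ d ∈ Finset.Icc 1 (k+1),
          (((k+1).choose d : ℚ)) * ddf (2*d-1) *
            (N (n-d) (k+1-d) - N (n-d+1) (k+1-d))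
        - c * ∑ d ∈ Finset.Icc 1 (k+1),
          (((k+1).choose d : ℚ)) * ddf (2*d-1) *
            (N (n-d-1) (k+1-d) - N (n-d) (k+1-d))
        = ∑ d ∈ Finset.Icc 1 (k+1),
          (((k+1).choose d : ℚ)) * ddf (2*d-1) *
            ((c+1) * N (n-d) (k+1-d) - N (n-d+1) (k+1-d) - c * N (n-d-1) (k+1-d)) := by
      rw [Finset.mul_sum, ← Finset.sum_sub_distrib]
      exact Finset.sum_congr rfl (fun d hd => by ring)
    linear_combination (1/2) * hsum
  · rw [N]
    have hcast : ((n-1 : ℕ) : ℚ) = (n:ℚ) - 1 := by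
      push_cast [Nat.cast_sub (by omega : 1 ≤ n)]; ring
    have hsum2 : ∑ d ∈ Finset.Icc 1 (k+1),
          (((k+1).choose d : ℚ)) * ddf (2*d-1) *
            (N (n-1-d) (k+1-d) - N (n-1-d+1) (k+1-d))
        = ∑ d ∈ Finset.Icc 1 (k+1),
          (((k+1).choose d : ℚ)) * ddf (2*d-1) *
            (N (n-d-1) (k+1-d) - N (n-d) (k+1-d)) := by
      refine Finset.sum_congr rfl (fun d hd => ?_)
      simp only [Finset.mem_Icc] at hd
      rw [show n-1-d = n-d-1 by omega, show n-d-1+1 = n-d by omega]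
    rw [hsum2, hcast]
    ring

section step
variable {k n : ℕ}
variable (Hih : ∀ j m : ℕ, j+1 < k+2 → j+3 ≤ m → ((m:ℚ)+(j:ℚ)-2) * N m j ≤ N m (j+1))
variable (Vih : ∀ j m : ℕ, j < k+2 → j+2 ≤ m → (2*((m:ℚ)+(j:ℚ))-5) * N (m-1) j ≤ 2 * N m j)
variable (Pih : ∀ j m : ℕ, j < k+2 → j+2 ≤ m → 0 < N m j)

include Hih Vih Pih in
lemma Qstep (hn : k + 4 ≤ n) (d : ℕ) (hd1 : 1 ≤ d) (hdk : d ≤ k) :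
    (((k+1).choose (d+1) : ℚ)) * ddf (2*(d+1)-1) * N (n-(d+1)+1) (k+1-(d+1))
      ≤ (1/2) * ((((k+1).choose d : ℚ)) * ddf (2*d-1) * N (n-d+1) (k+1-d)) := by
  have hker : k+1-(d+1) = k-d := by omega
  have hner : n-(d+1)+1 = n-d := by omega
  rw [hker, hner]
  have F1 := Hih (k-d) (n-d+1) (by omega) (by omega)
  rw [show (k-d)+1 = k+1-d by omega] at F1
  have F2 := Vih (k-d) (n-d+1) (by omega) (by omega)
  rw [show (n-d+1)-1 = n-d by omega] at F2
  have F3 := (Pih (k-d) (n-d) (by omega) (by omega)).le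
  have F4 := (Pih (k-d) (n-d+1) (by omega) (by omega)).le
  have c1 : ((n-d+1 : ℕ) : ℚ) = (n:ℚ)-(d:ℚ)+1 := by
    push_cast [Nat.cast_sub (by omega : d ≤ n)]; ring
  have c2 : ((k-d : ℕ) : ℚ) = (k:ℚ)-(d:ℚ) := by
    push_cast [Nat.cast_sub (by omega : d ≤ k)]; ring
  rw [c1, c2] at F1 F2
  have h1 : (1:ℚ) ≤ (d:ℚ) := by exact_mod_cast hd1
  have h2 : (d:ℚ) ≤ (k:ℚ) := by exact_mod_cast hdk
  have h3 : (k:ℚ)+4 ≤ (n:ℚ) := by exact_mod_cast hn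
  set C1 : ℚ := (((k+1).choose (d+1) : ℕ) : ℚ) with hC1
  set C0 : ℚ := (((k+1).choose d : ℕ) : ℚ) with hC0
  set E : ℚ := ddf (2*d-1) with hE
  set Z : ℚ := N (n-d) (k-d) with hZ
  set W : ℚ := N (n-d+1) (k+1-d) with hW
  have hch : C1 * ((d:ℚ)+1) = C0 * ((k:ℚ)+1-(d:ℚ)) := by
    have hnat := Nat.choose_succ_right_eq (k+1) d
    have hcast : (((k+1).choose (d+1) * (d+1) : ℕ) : ℚ) = (((k+1).choose d * (k+1-d) : ℕ) : ℚ) := by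
      exact_mod_cast congrArg (Nat.cast (R := ℚ)) hnat
    push_cast [Nat.cast_sub (by omega : d ≤ k+1)] at hcast
    rw [hC1, hC0]; push_cast; linarith [hcast]
  have hddf : ddf (2*(d+1)-1) = (2*(d:ℚ)+1) * E := by
    rw [show 2*(d+1)-1 = (2*d-1)+2 by omega, ddf]
    have : ((2*d-1 : ℕ):ℚ) = 2*(d:ℚ)-1 := by
      push_cast [Nat.cast_sub (by omega : 1 ≤ 2*d)]; ring
    rw [this, hE]; ring
  have hscal : 2*((k:ℚ)+1-(d:ℚ))*(2*(d:ℚ)+1)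
      ≤ ((d:ℚ)+1)*(((n:ℚ)+(k:ℚ)-2*(d:ℚ)-1)*((n:ℚ)+(k:ℚ)-2*(d:ℚ)-3/2)) := by
    nlinarith [mul_nonneg (sub_nonneg.2 h2) (sub_nonneg.2 h1),
      mul_nonneg (sub_nonneg.2 h2) (by linarith : (0:ℚ) ≤ (n:ℚ)-(k:ℚ)-4),
      mul_nonneg (sub_nonneg.2 h1) (by linarith : (0:ℚ) ≤ (n:ℚ)-(k:ℚ)-4),
      mul_nonneg (mul_nonneg (sub_nonneg.2 h1) (sub_nonneg.2 h2)) (by linarith : (0:ℚ) ≤ (n:ℚ)-(k:ℚ)-4),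
      mul_nonneg (mul_nonneg (sub_nonneg.2 h2) (sub_nonneg.2 h2)) (by linarith : (0:ℚ) ≤ (d:ℚ)-1),
      mul_nonneg (mul_nonneg (sub_nonneg.2 h2) (sub_nonneg.2 h1)) (sub_nonneg.2 h1)]
  have hA : ((n:ℚ)+(k:ℚ)-2*(d:ℚ)-1) * N (n-d+1) (k-d) ≤ W :=
    calc ((n:ℚ)+(k:ℚ)-2*(d:ℚ)-1) * N (n-d+1) (k-d)
        = ((n:ℚ)-(d:ℚ)+1+((k:ℚ)-(d:ℚ))-2) * N (n-d+1) (k-d) := by ring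
      _ ≤ W := F1
  have hB : ((n:ℚ)+(k:ℚ)-2*(d:ℚ)-3/2) * Z ≤ N (n-d+1) (k-d) := by
    rw [hZ]; linarith [F2]
  have hpos1 : (0:ℚ) ≤ (n:ℚ)+(k:ℚ)-2*(d:ℚ)-1 := by linarith
  have hZ0 : (0:ℚ) ≤ Z := F3
  have hchain : (((n:ℚ)+(k:ℚ)-2*(d:ℚ)-1)*((n:ℚ)+(k:ℚ)-2*(d:ℚ)-3/2)) * Z ≤ W :=
    calc (((n:ℚ)+(k:ℚ)-2*(d:ℚ)-1)*((n:ℚ)+(k:ℚ)-2*(d:ℚ)-3/2)) * Z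
        = ((n:ℚ)+(k:ℚ)-2*(d:ℚ)-1) * (((n:ℚ)+(k:ℚ)-2*(d:ℚ)-3/2) * Z) := by ring
      _ ≤ ((n:ℚ)+(k:ℚ)-2*(d:ℚ)-1) * N (n-d+1) (k-d) := mul_le_mul_of_nonneg_left hB hpos1
      _ ≤ W := hA
  have hC00 : (0:ℚ) ≤ C0 := by rw [hC0]; positivity
  have hE0 : (0:ℚ) < E := ddf_pos _
  rw [hddf]
  have hdpos : (0:ℚ) < 2*((d:ℚ)+1) := by positivity
  rw [← mul_le_mul_iff_right₀ hdpos]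
  have t1 : 2*((d:ℚ)+1) * (C1 * ((2*(d:ℚ)+1) * E) * Z)
      = 2*((k:ℚ)+1-(d:ℚ))*(2*(d:ℚ)+1) * (C0 * E * Z) := by
    linear_combination (2*(2*(d:ℚ)+1)*E*Z) * hch
  have t2 : 2*((k:ℚ)+1-(d:ℚ))*(2*(d:ℚ)+1) * (C0 * E * Z)
      ≤ ((d:ℚ)+1)*(((n:ℚ)+(k:ℚ)-2*(d:ℚ)-1)*((n:ℚ)+(k:ℚ)-2*(d:ℚ)-3/2)) * (C0 * E * Z) :=
    mul_le_mul_of_nonneg_right hscal (by positivity)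
  have t3 : ((d:ℚ)+1)*(((n:ℚ)+(k:ℚ)-2*(d:ℚ)-1)*((n:ℚ)+(k:ℚ)-2*(d:ℚ)-3/2)) * (C0 * E * Z)
      ≤ ((d:ℚ)+1) * (C0 * E) * W := by
    have := mul_le_mul_of_nonneg_left hchain (show (0:ℚ) ≤ ((d:ℚ)+1)*(C0*E) by positivity)
    calc ((d:ℚ)+1)*(((n:ℚ)+(k:ℚ)-2*(d:ℚ)-1)*((n:ℚ)+(k:ℚ)-2*(d:ℚ)-3/2)) * (C0 * E * Z)
        = ((d:ℚ)+1)*(C0*E) * ((((n:ℚ)+(k:ℚ)-2*(d:ℚ)-1)*((n:ℚ)+(k:ℚ)-2*(d:ℚ)-3/2)) * Z) := by ring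
      _ ≤ ((d:ℚ)+1)*(C0*E) * W := this
      _ = ((d:ℚ)+1) * (C0 * E) * W := by ring
  calc 2*((d:ℚ)+1) * (C1 * ((2*(d:ℚ)+1) * E) * Z)
      = 2*((k:ℚ)+1-(d:ℚ))*(2*(d:ℚ)+1) * (C0 * E * Z) := t1
    _ ≤ ((d:ℚ)+1)*(((n:ℚ)+(k:ℚ)-2*(d:ℚ)-1)*((n:ℚ)+(k:ℚ)-2*(d:ℚ)-3/2)) * (C0 * E * Z) := t2
    _ ≤ ((d:ℚ)+1) * (C0 * E) * W := t3
    _ = 2*((d:ℚ)+1) * (1/2 * (C0 * E * W)) := by ring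
end step

section step2
variable {k n : ℕ}
variable (Hih : ∀ j m : ℕ, j+1 < k+2 → j+3 ≤ m → ((m:ℚ)+(j:ℚ)-2) * N m j ≤ N m (j+1))
variable (Vih : ∀ j m : ℕ, j < k+2 → j+2 ≤ m → (2*((m:ℚ)+(j:ℚ))-5) * N (m-1) j ≤ 2 * N m j)
variable (Pih : ∀ j m : ℕ, j < k+2 → j+2 ≤ m → 0 < N m j)

include Hih Vih Pih in
lemma QL (hn : k + 4 ≤ n) :
    ∀ d, 1 ≤ d → d ≤ k+1 →
      (((k+1).choose d : ℚ)) * ddf (2*d-1) * N (n-d+1) (k+1-d)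
        ≤ ((k:ℚ)+1) * (1/2)^(d-1) * N n k := by
  intro d hd1
  induction d, hd1 using Nat.le_induction with
  | base =>
    intro _
    have e1 : n-1+1 = n := by omega
    have e2 : k+1-1 = k := by omega
    rw [e1, e2, Nat.choose_one_right, show 2*1-1 = 1 from rfl,
        show ddf 1 = 1 from rfl, show (1:ℕ)-1 = 0 from rfl, pow_zero]
    push_cast
    exact le_of_eq (by ring)
  | succ d hd ihd =>
    intro hdk1
    have hdk : d ≤ k := by omega
    calc (((k+1).choose (d+1) : ℚ)) * ddf (2*(d+1)-1) * N (n-(d+1)+1) (k+1-(d+1))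
        ≤ (1/2) * ((((k+1).choose d : ℚ)) * ddf (2*d-1) * N (n-d+1) (k+1-d)) :=
          Qstep Hih Vih Pih hn d hd hdk
      _ ≤ (1/2) * (((k:ℚ)+1) * (1/2)^(d-1) * N n k) := by
          have := ihd (by omega)
          linarith
      _ = ((k:ℚ)+1) * (1/2)^(d+1-1) * N n k := by
          rw [show d+1-1 = (d-1)+1 by omega, pow_succ]
          ring

include Hih Vih Pih in
lemma QL2 (hn : k + 4 ≤ n) :
    ∀ d, 2 ≤ d → d ≤ k+1 →
      (((k+1).choose d : ℚ)) * ddf (2*d-1) * N (n-d+1) (k+1-d)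
        ≤ (1/2)^(d-2) * ((((k+1).choose 2 : ℚ)) * 3 * N (n-1) (k-1)) := by
  intro d hd2
  induction d, hd2 using Nat.le_induction with
  | base =>
    intro _
    have e1 : n-2+1 = n-1 := by omega
    have e2 : k+1-2 = k-1 := by omega
    rw [e1, e2, show 2*2-1 = 3 from rfl, show (2:ℕ)-2 = 0 from rfl, pow_zero,
        show ddf 3 = 3 by norm_num [ddf]]
    exact le_of_eq (by ring)
  | succ d hd ihd =>
    intro hdk1
    have hdk : d ≤ k := by omega
    calc (((k+1).choose (d+1) : ℚ)) * ddf (2*(d+1)-1) * N (n-(d+1)+1) (k+1-(d+1))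
        ≤ (1/2) * ((((k+1).choose d : ℚ)) * ddf (2*d-1) * N (n-d+1) (k+1-d)) :=
          Qstep Hih Vih Pih hn d (by omega) hdk
      _ ≤ (1/2) * ((1/2)^(d-2) * ((((k+1).choose 2 : ℚ)) * 3 * N (n-1) (k-1))) := by
          have := ihd (by omega)
          linarith
      _ = (1/2)^(d+1-2) * ((((k+1).choose 2 : ℚ)) * 3 * N (n-1) (k-1)) := by
          rw [show d+1-2 = (d-2)+1 by omega, pow_succ]
          ring
end step2

lemma geo_eq : ∀ m : ℕ, ∑ d ∈ Finset.Icc 1 m, ((1:ℚ)/2)^(d-1) = 2 - 2*(1/2)^m := by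
  intro m
  induction m with
  | zero => simp
  | succ m ih =>
    rw [Finset.sum_Icc_succ_top (by omega : 1 ≤ m+1), ih,
        show m+1-1 = m by omega, pow_succ]
    ring

lemma geo_le (m : ℕ) : ∑ d ∈ Finset.Icc 1 m, ((1:ℚ)/2)^(d-1) ≤ 2 := by
  rw [geo_eq]
  have : (0:ℚ) ≤ (1/2)^m := by positivity
  linarith

lemma geo2_eq : ∀ m : ℕ, ∑ d ∈ Finset.Icc 2 m, ((1:ℚ)/2)^(d-2) ≤ 2 := by
  intro m
  rcases Nat.lt_or_ge m 2 with h | h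
  · rw [Finset.Icc_eq_empty (by omega)]; norm_num
  · have key : ∀ m', 2 ≤ m' → ∑ d ∈ Finset.Icc 2 m', ((1:ℚ)/2)^(d-2) = 2 - 2*(1/2)^(m'-1) := by
      intro m' hm'
      induction m', hm' using Nat.le_induction with
      | base => norm_num
      | succ m' hm' ih =>
        rw [Finset.sum_Icc_succ_top (by omega : 2 ≤ m'+1), ih]
        obtain ⟨t, rfl⟩ : ∃ t, m' = t+1 := ⟨m'-1, by omega⟩
        rw [show t+1+1-2 = t by omega, show t+1+1-1 = t+1 by omega,
            show t+1-1 = t by omega, pow_succ]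
        ring
    rw [key m h]
    have : (0:ℚ) ≤ (1/2)^(m-1) := by positivity
    linarith

section step3
variable {k n : ℕ}
variable (Hih : ∀ j m : ℕ, j+1 < k+2 → j+3 ≤ m → ((m:ℚ)+(j:ℚ)-2) * N m j ≤ N m (j+1))
variable (Vih : ∀ j m : ℕ, j < k+2 → j+2 ≤ m → (2*((m:ℚ)+(j:ℚ))-5) * N (m-1) j ≤ 2 * N m j)
variable (Pih : ∀ j m : ℕ, j < k+2 → j+2 ≤ m → 0 < N m j)

include Vih Pih in
lemma mono_ih : ∀ j m : ℕ, j < k+2 → j+3 ≤ m → N (m-1) j ≤ N m j := by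
  intro j m hj hm
  rcases Nat.lt_or_ge (j+m) 4 with h | h
  · -- j = 0, m = 3
    have hj0 : j = 0 := by omega
    have hm3 : m = 3 := by omega
    subst hj0; subst hm3
    show N 2 0 ≤ N 3 0
    norm_num [N, ddf]
  · have hV := Vih j m hj (by omega)
    have hP := (Pih j (m-1) hj (by omega)).le
    have h4 : (4:ℚ) ≤ (j:ℚ)+(m:ℚ) := by exact_mod_cast h
    nlinarith [hV, hP]

include Hih Vih Pih in
lemma sumb1 (hn : k + 4 ≤ n) :
    ∑ d ∈ Finset.Icc 1 (k+1), (((k+1).choose d : ℚ)) * ddf (2*d-1) * N (n-d+1) (k+1-d)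
      ≤ 2 * ((k:ℚ)+1) * N n k := by
  have hNk := (Pih k n (by omega) (by omega)).le
  calc ∑ d ∈ Finset.Icc 1 (k+1), (((k+1).choose d : ℚ)) * ddf (2*d-1) * N (n-d+1) (k+1-d)
      ≤ ∑ d ∈ Finset.Icc 1 (k+1), ((k:ℚ)+1) * (1/2)^(d-1) * N n k := by
        refine Finset.sum_le_sum (fun d hd => ?_)
        simp only [Finset.mem_Icc] at hd
        exact QL Hih Vih Pih hn d hd.1 hd.2
    _ = ((k:ℚ)+1) * N n k * ∑ d ∈ Finset.Icc 1 (k+1), ((1:ℚ)/2)^(d-1) := by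
        rw [Finset.mul_sum]
        exact Finset.sum_congr rfl (fun d _ => by ring)
    _ ≤ ((k:ℚ)+1) * N n k * 2 := by
        refine mul_le_mul_of_nonneg_left (geo_le _) (by positivity)
    _ = 2 * ((k:ℚ)+1) * N n k := by ring

include Hih Vih Pih in
lemma sumb2 (hn : k + 4 ≤ n) :
    ∑ d ∈ Finset.Icc 2 (k+1), (((k+1).choose d : ℚ)) * ddf (2*d-1) * N (n-d+1) (k+1-d)
      ≤ 2 * ((((k+1).choose 2 : ℚ)) * 3) * N (n-1) (k-1) := by
  rcases Nat.lt_or_ge k 1 with hk | hk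
  · have : k = 0 := by omega
    subst this
    rw [Finset.Icc_eq_empty (by omega), Finset.sum_empty]
    norm_num [Nat.choose]
  · have hT := (Pih (k-1) (n-1) (by omega) (by omega)).le
    calc ∑ d ∈ Finset.Icc 2 (k+1), (((k+1).choose d : ℚ)) * ddf (2*d-1) * N (n-d+1) (k+1-d)
        ≤ ∑ d ∈ Finset.Icc 2 (k+1), (1/2)^(d-2) * ((((k+1).choose 2 : ℚ)) * 3 * N (n-1) (k-1)) := by
          refine Finset.sum_le_sum (fun d hd => ?_)
          simp only [Finset.mem_Icc] at hd
          exact QL2 Hih Vih Pih hn d hd.1 hd.2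
      _ = ((((k+1).choose 2 : ℚ)) * 3 * N (n-1) (k-1)) * ∑ d ∈ Finset.Icc 2 (k+1), ((1:ℚ)/2)^(d-2) := by
          rw [Finset.mul_sum]
          exact Finset.sum_congr rfl (fun d _ => by ring)
      _ ≤ ((((k+1).choose 2 : ℚ)) * 3 * N (n-1) (k-1)) * 2 := by
          refine mul_le_mul_of_nonneg_left (geo2_eq _) (by positivity)
      _ = 2 * ((((k+1).choose 2 : ℚ)) * 3) * N (n-1) (k-1) := by ring

include Hih Vih Pih in
lemma Hstep (hn : k + 4 ≤ n) : ((n:ℚ)+(k:ℚ)+2-3) * N n (k+1) ≤ N n (k+2) := by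
  rw [N]
  have hNk := (Pih k n (by omega) (by omega)).le
  have hsum : -(2 * ((k:ℚ)+1) * N n k)
      ≤ ∑ d ∈ Finset.Icc 1 (k+1), (((k+1).choose d : ℚ)) * ddf (2*d-1) *
          (N (n-d) (k+1-d) - N (n-d+1) (k+1-d)) := by
    have h1 : ∑ d ∈ Finset.Icc 1 (k+1), -((((k+1).choose d : ℚ)) * ddf (2*d-1) * N (n-d+1) (k+1-d))
        ≤ ∑ d ∈ Finset.Icc 1 (k+1), (((k+1).choose d : ℚ)) * ddf (2*d-1) *
          (N (n-d) (k+1-d) - N (n-d+1) (k+1-d)) := by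
      refine Finset.sum_le_sum (fun d hd => ?_)
      simp only [Finset.mem_Icc] at hd
      have hpos := (Pih (k+1-d) (n-d) (by omega) (by omega)).le
      have hw : (0:ℚ) ≤ (((k+1).choose d : ℚ)) * ddf (2*d-1) := by
        have := (ddf_pos (2*d-1)).le
        positivity
      nlinarith [mul_le_mul_of_nonneg_left hpos hw]
    have h2 := sumb1 Hih Vih Pih hn
    rw [Finset.sum_neg_distrib] at h1
    linarith
  nlinarith [hsum]
end step3

section step4
variable {k n : ℕ}
variable (Hih : ∀ j m : ℕ, j+1 < k+2 → j+3 ≤ m → ((m:ℚ)+(j:ℚ)-2) * N m j ≤ N m (j+1))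
variable (Vih : ∀ j m : ℕ, j < k+2 → j+2 ≤ m → (2*((m:ℚ)+(j:ℚ))-5) * N (m-1) j ≤ 2 * N m j)
variable (Pih : ∀ j m : ℕ, j < k+2 → j+2 ≤ m → 0 < N m j)
variable (Rih : ∀ j m : ℕ, j < k+2 → j+3 ≤ m → 5 ≤ m → (5*((m:ℚ)+(j:ℚ))-10) * N (m-1) j ≤ 4 * N m j)

include Hih Vih Pih in
lemma sum_bracket_lb (hn : k + 4 ≤ n) (c : ℚ) (hc : 0 ≤ c) :
    -(2*((k:ℚ)+1) * N n k) ≤ ∑ d ∈ Finset.Icc 1 (k+1),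
        (((k+1).choose d : ℚ)) * ddf (2*d-1) *
          ((c+1) * N (n-d) (k+1-d) - N (n-d+1) (k+1-d) - c * N (n-d-1) (k+1-d)) := by
  have h1 : ∑ d ∈ Finset.Icc 1 (k+1),
      -((((k+1).choose d : ℚ)) * ddf (2*d-1) * N (n-d+1) (k+1-d))
      ≤ ∑ d ∈ Finset.Icc 1 (k+1),
        (((k+1).choose d : ℚ)) * ddf (2*d-1) *
          ((c+1) * N (n-d) (k+1-d) - N (n-d+1) (k+1-d) - c * N (n-d-1) (k+1-d)) := by
    refine Finset.sum_le_sum (fun d hd => ?_)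
    simp only [Finset.mem_Icc] at hd
    have hw : (0:ℚ) ≤ (((k+1).choose d : ℚ)) * ddf (2*d-1) := by
      have := (ddf_pos (2*d-1)).le
      positivity
    have hmono := mono_ih Vih Pih (k+1-d) (n-d) (by omega) (by omega)
    have hpos := (Pih (k+1-d) (n-d-1) (by omega) (by omega)).le
    have h0 : (0:ℚ) ≤ (c+1) * N (n-d) (k+1-d) - c * N (n-d-1) (k+1-d) := by nlinarith
    nlinarith [mul_nonneg hw h0]
  rw [Finset.sum_neg_distrib] at h1
  have h2 := sumb1 Hih Vih Pih hn
  linarith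

include Hih Vih Pih Rih in
lemma Vstep (hn : k + 4 ≤ n) (hn5 : 5 ≤ n) :
    (2*((n:ℚ)+((k:ℚ)+2))-5) * N (n-1) (k+2) ≤ 2 * N n (k+2) := by
  have hk0 : (0:ℚ) ≤ (k:ℚ) := by positivity
  have hnk : (k:ℚ)+4 ≤ (n:ℚ) := by exact_mod_cast hn
  have hn5' : (5:ℚ) ≤ (n:ℚ) := by exact_mod_cast hn5
  obtain ⟨c, hcdef⟩ : ∃ c:ℚ, c = (n:ℚ)+(k:ℚ)+2-5/2 := ⟨_, rfl⟩
  have hc : (0:ℚ) ≤ c := by rw [hcdef]; linarith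
  suffices h : 0 ≤ N n (k+2) - c * N (n-1) (k+2) by
    have : (2*((n:ℚ)+((k:ℚ)+2))-5) = 2*c := by rw [hcdef]; ring
    rw [this]; linarith
  rw [N_decomp n k (by omega) c]
  have hsum := sum_bracket_lb Hih Vih Pih hn c hc
  have hNk0 := (Pih k n (by omega) (by omega)).le
  have hN'0 := (Pih k (n-1) (by omega) (by omega)).le
  have hB0 := (Pih (k+1) (n-1) (by omega) (by omega)).le
  have f1 := Rih (k+1) n (by omega) (by omega) hn5
  push_cast at f1
  have f4 := Hih k (n-1) (by omega) (by omega)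
  have c1 : ((n-1:ℕ):ℚ) = (n:ℚ)-1 := by
    push_cast [Nat.cast_sub (by omega : 1 ≤ n)]; ring
  rw [c1] at f4
  -- scalar certificate
  have hscal : 0 ≤ ((n:ℚ)+k-3)*((n:ℚ)+k-1)*(5*(n:ℚ)+5*k-5)
      - 4*c*((n:ℚ)+k-2)*((n:ℚ)+k-3) - 4*((k:ℚ)+1)*c := by
    have hb : (0:ℚ) ≤ (n:ℚ)-(k:ℚ)-4 := by linarith
    rw [hcdef]
    nlinarith [hk0, hb, mul_nonneg hk0 hb, mul_nonneg hk0 hk0, mul_nonneg hb hb,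
      mul_nonneg (mul_nonneg hk0 hk0) hb, mul_nonneg (mul_nonneg hk0 hb) hb,
      mul_nonneg (mul_nonneg hk0 hk0) hk0, mul_nonneg (mul_nonneg hb hb) hb]
  have m1 : (0:ℚ) ≤ ((n:ℚ)+k-3)*((n:ℚ)+k-1) * (4*N n (k+1) - (5*(n:ℚ)+5*k-5)*N (n-1) (k+1)) := by
    refine mul_nonneg (by nlinarith) (by nlinarith [f1])
  have m2 : (0:ℚ) ≤ 4*((k:ℚ)+1)*c * (N (n-1) (k+1) - ((n:ℚ)+k-3)*N (n-1) k) := by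
    refine mul_nonneg (by positivity) (by nlinarith [f4])
  have m3 : (0:ℚ) ≤ (((n:ℚ)+k-3)*((n:ℚ)+k-1)*(5*(n:ℚ)+5*k-5)
      - 4*c*((n:ℚ)+k-2)*((n:ℚ)+k-3) - 4*((k:ℚ)+1)*c) * N (n-1) (k+1) :=
    mul_nonneg hscal hB0
  have key : 0 ≤ 4*((n:ℚ)+k-3) * (((n:ℚ)+k-1) * N n (k+1) - c*((n:ℚ)+k-2) * N (n-1) (k+1)
      - ((k:ℚ)+1)*c*N (n-1) k) := by
    have hid : 4*((n:ℚ)+k-3) * (((n:ℚ)+k-1) * N n (k+1) - c*((n:ℚ)+k-2) * N (n-1) (k+1)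
        - ((k:ℚ)+1)*c*N (n-1) k)
        = ((n:ℚ)+k-3)*((n:ℚ)+k-1) * (4*N n (k+1) - (5*(n:ℚ)+5*k-5)*N (n-1) (k+1))
          + 4*((k:ℚ)+1)*c * (N (n-1) (k+1) - ((n:ℚ)+k-3)*N (n-1) k)
          + (((n:ℚ)+k-3)*((n:ℚ)+k-1)*(5*(n:ℚ)+5*k-5)
              - 4*c*((n:ℚ)+k-2)*((n:ℚ)+k-3) - 4*((k:ℚ)+1)*c) * N (n-1) (k+1) := by ring
    rw [hid]
    linarith
  have key2 : 0 ≤ ((n:ℚ)+k-1) * N n (k+1) - c*((n:ℚ)+k-2) * N (n-1) (k+1)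
      - ((k:ℚ)+1)*c*N (n-1) k := by
    have hpos : (0:ℚ) < 4*((n:ℚ)+k-3) := by linarith
    exact (mul_nonneg_iff_of_pos_left hpos).mp key
  linarith [hsum, key2]
end step4

section step5
variable {k n : ℕ}
variable (Hih : ∀ j m : ℕ, j+1 < k+2 → j+3 ≤ m → ((m:ℚ)+(j:ℚ)-2) * N m j ≤ N m (j+1))
variable (Vih : ∀ j m : ℕ, j < k+2 → j+2 ≤ m → (2*((m:ℚ)+(j:ℚ))-5) * N (m-1) j ≤ 2 * N m j)
variable (Pih : ∀ j m : ℕ, j < k+2 → j+2 ≤ m → 0 < N m j)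
variable (Rih : ∀ j m : ℕ, j < k+2 → j+3 ≤ m → 5 ≤ m → (5*((m:ℚ)+(j:ℚ))-10) * N (m-1) j ≤ 4 * N m j)

include Hih Vih Pih in
lemma sum_bracket_lb2 (hn : k + 4 ≤ n) (c : ℚ) (hc : 0 ≤ c) :
    -(2 * ((((k+1).choose 2 : ℚ)) * 3) * N (n-1) (k-1)) ≤ ∑ d ∈ Finset.Icc 2 (k+1),
        (((k+1).choose d : ℚ)) * ddf (2*d-1) *
          ((c+1) * N (n-d) (k+1-d) - N (n-d+1) (k+1-d) - c * N (n-d-1) (k+1-d)) := by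
  have h1 : ∑ d ∈ Finset.Icc 2 (k+1),
      -((((k+1).choose d : ℚ)) * ddf (2*d-1) * N (n-d+1) (k+1-d))
      ≤ ∑ d ∈ Finset.Icc 2 (k+1),
        (((k+1).choose d : ℚ)) * ddf (2*d-1) *
          ((c+1) * N (n-d) (k+1-d) - N (n-d+1) (k+1-d) - c * N (n-d-1) (k+1-d)) := by
    refine Finset.sum_le_sum (fun d hd => ?_)
    simp only [Finset.mem_Icc] at hd
    have hw : (0:ℚ) ≤ (((k+1).choose d : ℚ)) * ddf (2*d-1) := by
      have := (ddf_pos (2*d-1)).le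
      positivity
    have hmono := mono_ih Vih Pih (k+1-d) (n-d) (by omega) (by omega)
    have hpos := (Pih (k+1-d) (n-d-1) (by omega) (by omega)).le
    have h0 : (0:ℚ) ≤ (c+1) * N (n-d) (k+1-d) - c * N (n-d-1) (k+1-d) := by nlinarith
    nlinarith [mul_nonneg hw h0]
  rw [Finset.sum_neg_distrib] at h1
  have h2 := sumb2 Hih Vih Pih hn
  linarith

set_option maxHeartbeats 2000000 in
include Hih Vih Pih Rih in
lemma Rstep (hn : k + 5 ≤ n) (hn6 : 6 ≤ n) :
    (5*((n:ℚ)+((k:ℚ)+2))-10) * N (n-1) (k+2) ≤ 4 * N n (k+2) := by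
  have hk0 : (0:ℚ) ≤ (k:ℚ) := by positivity
  have hnk : (k:ℚ)+5 ≤ (n:ℚ) := by exact_mod_cast hn
  have hn6' : (6:ℚ) ≤ (n:ℚ) := by exact_mod_cast hn6
  obtain ⟨c, hcdef⟩ : ∃ c:ℚ, c = (5*(n:ℚ)+5*(k:ℚ))/4 := ⟨_, rfl⟩
  have hc : (0:ℚ) ≤ c := by rw [hcdef]; linarith
  suffices h : 0 ≤ N n (k+2) - c * N (n-1) (k+2) by
    have : (5*((n:ℚ)+((k:ℚ)+2))-10) = 4*c := by rw [hcdef]; ring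
    rw [this]; linarith
  rw [N_decomp n k (by omega) c]
  have hicc : Finset.Icc 1 (k+1) = insert 1 (Finset.Icc 2 (k+1)) := by
    ext x; simp only [Finset.mem_Icc, Finset.mem_insert]; omega
  rw [hicc, Finset.sum_insert (by simp)]
  rw [show n-1+1 = n by omega, show k+1-1 = k by omega, show n-1-1 = n-2 by omega,
      Nat.choose_one_right, show 2*1-1 = 1 from rfl, show ddf 1 = 1 from rfl]
  have htail := sum_bracket_lb2 Hih Vih Pih (by omega : k+4 ≤ n) c hc
  -- facts
  have hNk0 := (Pih k n (by omega) (by omega)).le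
  have hNp0 := (Pih k (n-1) (by omega) (by omega)).le
  have hE0 := (Pih k (n-2) (by omega) (by omega)).le
  have hB0 := (Pih (k+1) (n-1) (by omega) (by omega)).le
  have cn1 : ((n-1:ℕ):ℚ) = (n:ℚ)-1 := by
    push_cast [Nat.cast_sub (by omega : 1 ≤ n)]; ring
  have f1 := Rih (k+1) n (by omega) (by omega) (by omega)
  push_cast at f1
  have f2 := Rih k n (by omega) (by omega) (by omega)
  have f3 := Rih k (n-1) (by omega) (by omega) (by omega)
  rw [cn1, show (n-1)-1 = n-2 by omega] at f3
  have f4 := Hih k (n-1) (by omega) (by omega)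
  rw [cn1] at f4
  have hF1 : 0 ≤ 4 * N n (k+1) - (5*(n:ℚ)+5*(k:ℚ)-5) * N (n-1) (k+1) := by linarith [f1]
  have hF2 : 0 ≤ 4 * N n k - (5*(n:ℚ)+5*(k:ℚ)-10) * N (n-1) k := by linarith [f2]
  have hF3 : 0 ≤ 4 * N (n-1) k - (5*(n:ℚ)+5*(k:ℚ)-15) * N (n-2) k := by linarith [f3]
  have hF4 : 0 ≤ N (n-1) (k+1) - ((n:ℚ)+(k:ℚ)-3) * N (n-1) k := by linarith [f4]
  rcases Nat.eq_zero_or_pos k with hk | hk1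
  · -- k = 0
    subst hk
    have hT0 : (0:ℚ) ≤ N (n-1) (0-1) := (Pih 0 (n-1) (by omega) (by omega)).le
    have htail0 : (0:ℚ) ≤ ∑ d ∈ Finset.Icc 2 (0+1),
        (((0+1).choose d : ℚ)) * ddf (2*d-1) *
          ((c+1) * N (n-d) (0+1-d) - N (n-d+1) (0+1-d) - c * N (n-d-1) (0+1-d)) := by
      rw [Finset.Icc_eq_empty (by omega), Finset.sum_empty]
    have eb : ((n-6:ℕ):ℚ) = (n:ℚ)-6 := by
      push_cast [Nat.cast_sub (by omega : 6 ≤ n)]; ring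
    have hsig : (0:ℚ) ≤ (240:ℚ) + (250:ℚ)*((n-6:ℕ):ℚ) + (50:ℚ)*((n-6:ℕ):ℚ)*((n-6:ℕ):ℚ) := by
      positivity
    rw [eb] at hsig
    have hM : (0:ℚ) < 8*(5*(n:ℚ)-15)*((n:ℚ)-3) := by nlinarith
    have key : 0 ≤ 8*(5*(n:ℚ)-15)*((n:ℚ)-3) *
        (((n:ℚ)-1) * N n 1 - c*((n:ℚ)-2) * N (n-1) 1
          + (1/2) * N n 0 - (1/2)*(c-1) * N (n-1) 0 - (1/2)*c * N (n-2) 0) := by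
      have hid : 8*(5*(n:ℚ)-15)*((n:ℚ)-3) *
          (((n:ℚ)-1) * N n 1 - c*((n:ℚ)-2) * N (n-1) 1
            + (1/2) * N n 0 - (1/2)*(c-1) * N (n-1) 0 - (1/2)*c * N (n-2) 0)
          = (4*c*((n:ℚ)-3)) * (4 * N (n-1) 0 - (5*(n:ℚ)-15) * N (n-2) 0)
            + ((5*(n:ℚ)-15)*((n:ℚ)-3)) * (4 * N n 0 - (5*(n:ℚ)-10) * N (n-1) 0)
            + (2*(5*(n:ℚ)-15)*((n:ℚ)-3)*((n:ℚ)-1)) * (4 * N n 1 - (5*(n:ℚ)-5) * N (n-1) 1)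
            + ((6*(5*(n:ℚ)-15)+20*(n:ℚ))) * (N (n-1) 1 - ((n:ℚ)-3) * N (n-1) 0)
            + ((240:ℚ) + (250:ℚ)*((n:ℚ)-6) + (50:ℚ)*((n:ℚ)-6)*((n:ℚ)-6)) * N (n-1) 1 := by
        rw [hcdef]; push_cast; ring
      rw [hid]
      have t1 : (0:ℚ) ≤ (4*c*((n:ℚ)-3)) * (4 * N (n-1) 0 - (5*(n:ℚ)-15) * N (n-2) 0) := by
        refine mul_nonneg (by nlinarith [hc]) (by push_cast at hF3; linarith [hF3])
      have t2 : (0:ℚ) ≤ ((5*(n:ℚ)-15)*((n:ℚ)-3)) * (4 * N n 0 - (5*(n:ℚ)-10) * N (n-1) 0) := by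
        refine mul_nonneg (by nlinarith) (by push_cast at hF2; linarith [hF2])
      have t3 : (0:ℚ) ≤ (2*(5*(n:ℚ)-15)*((n:ℚ)-3)*((n:ℚ)-1)) * (4 * N n 1 - (5*(n:ℚ)-5) * N (n-1) 1) := by
        refine mul_nonneg (by nlinarith) (by push_cast at hF1; linarith [hF1])
      have t4 : (0:ℚ) ≤ ((6*(5*(n:ℚ)-15)+20*(n:ℚ))) * (N (n-1) 1 - ((n:ℚ)-3) * N (n-1) 0) := by
        refine mul_nonneg (by nlinarith) (by push_cast at hF4; linarith [hF4])
      have t5 : (0:ℚ) ≤ ((240:ℚ) + (250:ℚ)*((n:ℚ)-6) + (50:ℚ)*((n:ℚ)-6)*((n:ℚ)-6)) * N (n-1) 1 := by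
        push_cast at hB0
        exact mul_nonneg hsig hB0
      linarith
    have key2 := (mul_nonneg_iff_of_pos_left hM).mp key
    push_cast
    push_cast at htail0 key2
    linarith [htail0, key2]
  · -- k ≥ 1
    have hk1' : (1:ℚ) ≤ (k:ℚ) := by exact_mod_cast hk1
    have pA : (0:ℚ) < 5*(n:ℚ)+5*(k:ℚ)-15 := by linarith
    have pB : (0:ℚ) < (n:ℚ)+(k:ℚ)-3 := by linarith
    have pC : (0:ℚ) < (n:ℚ)+(k:ℚ)-2 := by linarith
    have pD : (0:ℚ) < 5*(n:ℚ)+5*(k:ℚ)-10 := by linarith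
    have pE : (0:ℚ) < (n:ℚ)+(k:ℚ)-4 := by linarith
    have pK : (0:ℚ) < (k:ℚ)+1 := by linarith
    have p8 : (0:ℚ) < (8:ℚ) := by norm_num
    have pCDE : (0:ℚ) < ((n:ℚ)+(k:ℚ)-2)*(5*(n:ℚ)+5*(k:ℚ)-10)*((n:ℚ)+(k:ℚ)-4) :=
      mul_pos (mul_pos pC pD) pE
    have hT0 := (Pih (k-1) (n-1) (by omega) (by omega)).le
    -- choose-2 identity
    have hch2 : 2*(((k+1).choose 2 : ℕ) : ℚ) = ((k:ℚ)+1)*(k:ℚ) := by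
      have hnat : (k+1).choose 2 * 2 = (k+1)*k := by
        rw [Nat.choose_two_right]
        exact Nat.div_mul_cancel (by simpa [mul_comm] using (Nat.even_mul_succ_self k).two_dvd)
      have := congrArg (Nat.cast (R := ℚ)) hnat
      push_cast at this
      linarith
    -- anchor chain
    have f6 := Hih (k-1) (n-1) (by omega) (by omega)
    rw [cn1, show (k-1)+1 = k by omega] at f6
    have ck1 : ((k-1:ℕ):ℚ) = (k:ℚ)-1 := by
      push_cast [Nat.cast_sub (by omega : 1 ≤ k)]; ring
    rw [ck1] at f6
    have st1 := Hih k n (by omega) (by omega)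
    have hFA : 0 ≤ 4 * N n (k+1)
        - ((n:ℚ)+(k:ℚ)-2)*(5*(n:ℚ)+5*(k:ℚ)-10)*((n:ℚ)+(k:ℚ)-4) * N (n-1) (k-1) := by
      have s3 : ((n:ℚ)+(k:ℚ)-2)*(5*(n:ℚ)+5*(k:ℚ)-10)*(((n:ℚ)+(k:ℚ)-4) * N (n-1) (k-1))
          ≤ ((n:ℚ)+(k:ℚ)-2)*(5*(n:ℚ)+5*(k:ℚ)-10)* N (n-1) k := by
        refine mul_le_mul_of_nonneg_left (by linarith [f6]) (by nlinarith)
      have s2 : ((n:ℚ)+(k:ℚ)-2)*((5*(n:ℚ)+5*(k:ℚ)-10)* N (n-1) k)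
          ≤ ((n:ℚ)+(k:ℚ)-2)*(4 * N n k) := by
        refine mul_le_mul_of_nonneg_left (by linarith [f2]) (by linarith)
      have s1 : 4*(((n:ℚ)+(k:ℚ)-2) * N n k) ≤ 4 * N n (k+1) := by linarith [st1]
      nlinarith [s3, s2, s1]
    -- shifted-variable nonneg certificates
    have ea : ((k-1:ℕ):ℚ) = (k:ℚ)-1 := ck1
    have eb : ((n-(k+5):ℕ):ℚ) = (n:ℚ)-((k:ℚ)+5) := by
      push_cast [Nat.cast_sub (by omega : k+5 ≤ n)]; ring
    obtain ⟨a, hadef⟩ : ∃ a:ℚ, a = ((k-1:ℕ):ℚ) := ⟨_, rfl⟩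
    obtain ⟨b, hbdef⟩ : ∃ b:ℚ, b = ((n-(k+5):ℕ):ℚ) := ⟨_, rfl⟩
    have ha0 : (0:ℚ) ≤ a := by rw [hadef]; positivity
    have hb0 : (0:ℚ) ≤ b := by rw [hbdef]; positivity
    have ea' : a = (k:ℚ)-1 := by rw [hadef, ea]
    have eb' : b = (n:ℚ)-((k:ℚ)+5) := by rw [hbdef, eb]
    have hsig : (0:ℚ) ≤ (47400:ℚ) + (151100:ℚ)*b + (111050:ℚ)*b*b + (34050:ℚ)*b*b*b + (4750:ℚ)*b*b*b*b + (250:ℚ)*b*b*b*b*b + (118300:ℚ)*a + (296350:ℚ)*a*b + (161050:ℚ)*a*b*b + (32550:ℚ)*a*b*b*b + (2250:ℚ)*a*b*b*b*b + (119700:ℚ)*a*a + (216400:ℚ)*a*a*b + (77100:ℚ)*a*a*b*b + (7700:ℚ)*a*a*b*b*b + (61000:ℚ)*a*a*a + (69800:ℚ)*a*a*a*b + (12200:ℚ)*a*a*a*b*b + (15600:ℚ)*a*a*a*a + (8400:ℚ)*a*a*a*a*b + (1600:ℚ)*a*a*a*a*a := by positivity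
    have halpha4 : (0:ℚ) ≤ (358080:ℚ) + (503040:ℚ)*b + (290780:ℚ)*b*b + (88650:ℚ)*b*b*b + (15050:ℚ)*b*b*b*b + (1350:ℚ)*b*b*b*b*b + (50:ℚ)*b*b*b*b*b*b + (1003200:ℚ)*a + (1161680:ℚ)*a*b + (531720:ℚ)*a*b*b + (120400:ℚ)*a*b*b*b + (13500:ℚ)*a*b*b*b*b + (600:ℚ)*a*b*b*b*b*b + (1159280:ℚ)*a*a + (1062600:ℚ)*a*a*b + (361140:ℚ)*a*a*b*b + (54000:ℚ)*a*a*b*b*b + (3000:ℚ)*a*a*b*b*b*b + (707520:ℚ)*a*a*a + (481360:ℚ)*a*a*a*b + (108000:ℚ)*a*a*a*b*b + (8000:ℚ)*a*a*a*b*b*b + (240560:ℚ)*a*a*a*a + (108000:ℚ)*a*a*a*a*b + (12000:ℚ)*a*a*a*a*b*b + (43200:ℚ)*a*a*a*a*a + (9600:ℚ)*a*a*a*a*a*b + (3200:ℚ)*a*a*a*a*a*a := by positivity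
    -- main key inequality
    have hM : (0:ℚ) < 8*(5*(n:ℚ)+5*(k:ℚ)-15)*((n:ℚ)+(k:ℚ)-3)
        *(((n:ℚ)+(k:ℚ)-2)*(5*(n:ℚ)+5*(k:ℚ)-10)*((n:ℚ)+(k:ℚ)-4)) :=
      mul_pos (mul_pos (mul_pos p8 pA) pB) pCDE
    have key : 0 ≤ 8*(5*(n:ℚ)+5*(k:ℚ)-15)*((n:ℚ)+(k:ℚ)-3)
        *(((n:ℚ)+(k:ℚ)-2)*(5*(n:ℚ)+5*(k:ℚ)-10)*((n:ℚ)+(k:ℚ)-4)) *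
        ( ((n:ℚ)+(k:ℚ)-1) * N n (k+1) - c*((n:ℚ)+(k:ℚ)-2) * N (n-1) (k+1)
          + ((k:ℚ)+1)/2 * N n k - ((k:ℚ)+1)/2*(c-1) * N (n-1) k - ((k:ℚ)+1)/2*c * N (n-2) k
          - (3/2)*(k:ℚ)*((k:ℚ)+1) * N (n-1) (k-1) ) := by
      have hid : 8*(5*(n:ℚ)+5*(k:ℚ)-15)*((n:ℚ)+(k:ℚ)-3)
          *(((n:ℚ)+(k:ℚ)-2)*(5*(n:ℚ)+5*(k:ℚ)-10)*((n:ℚ)+(k:ℚ)-4)) *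
          ( ((n:ℚ)+(k:ℚ)-1) * N n (k+1) - c*((n:ℚ)+(k:ℚ)-2) * N (n-1) (k+1)
            + ((k:ℚ)+1)/2 * N n k - ((k:ℚ)+1)/2*(c-1) * N (n-1) k - ((k:ℚ)+1)/2*c * N (n-2) k
            - (3/2)*(k:ℚ)*((k:ℚ)+1) * N (n-1) (k-1) )
          = (4*((k:ℚ)+1)*c*((n:ℚ)+(k:ℚ)-3)*(((n:ℚ)+(k:ℚ)-2)*(5*(n:ℚ)+5*(k:ℚ)-10)*((n:ℚ)+(k:ℚ)-4)))
              * (4 * N (n-1) k - (5*(n:ℚ)+5*(k:ℚ)-15) * N (n-2) k)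
            + (((k:ℚ)+1)*(5*(n:ℚ)+5*(k:ℚ)-15)*((n:ℚ)+(k:ℚ)-3)*(((n:ℚ)+(k:ℚ)-2)*(5*(n:ℚ)+5*(k:ℚ)-10)*((n:ℚ)+(k:ℚ)-4)))
              * (4 * N n k - (5*(n:ℚ)+5*(k:ℚ)-10) * N (n-1) k)
            + (12*(k:ℚ)*((k:ℚ)+1)*(5*(n:ℚ)+5*(k:ℚ)-15)*((n:ℚ)+(k:ℚ)-3))
              * (4 * N n (k+1) - ((n:ℚ)+(k:ℚ)-2)*(5*(n:ℚ)+5*(k:ℚ)-10)*((n:ℚ)+(k:ℚ)-4) * N (n-1) (k-1))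
            + ((358080:ℚ) + (503040:ℚ)*b + (290780:ℚ)*b*b + (88650:ℚ)*b*b*b + (15050:ℚ)*b*b*b*b + (1350:ℚ)*b*b*b*b*b + (50:ℚ)*b*b*b*b*b*b + (1003200:ℚ)*a + (1161680:ℚ)*a*b + (531720:ℚ)*a*b*b + (120400:ℚ)*a*b*b*b + (13500:ℚ)*a*b*b*b*b + (600:ℚ)*a*b*b*b*b*b + (1159280:ℚ)*a*a + (1062600:ℚ)*a*a*b + (361140:ℚ)*a*a*b*b + (54000:ℚ)*a*a*b*b*b + (3000:ℚ)*a*a*b*b*b*b + (707520:ℚ)*a*a*a + (481360:ℚ)*a*a*a*b + (108000:ℚ)*a*a*a*b*b + (8000:ℚ)*a*a*a*b*b*b + (240560:ℚ)*a*a*a*a + (108000:ℚ)*a*a*a*a*b + (12000:ℚ)*a*a*a*a*b*b + (43200:ℚ)*a*a*a*a*a + (9600:ℚ)*a*a*a*a*a*b + (3200:ℚ)*a*a*a*a*a*a)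
              * (4 * N n (k+1) - (5*(n:ℚ)+5*(k:ℚ)-5) * N (n-1) (k+1))
            + (((k:ℚ)+1)*(6*(5*(n:ℚ)+5*(k:ℚ)-15)+20*((n:ℚ)+(k:ℚ)))*(((n:ℚ)+(k:ℚ)-2)*(5*(n:ℚ)+5*(k:ℚ)-10)*((n:ℚ)+(k:ℚ)-4)))
              * (N (n-1) (k+1) - ((n:ℚ)+(k:ℚ)-3) * N (n-1) k)
            + ((47400:ℚ) + (151100:ℚ)*b + (111050:ℚ)*b*b + (34050:ℚ)*b*b*b + (4750:ℚ)*b*b*b*b + (250:ℚ)*b*b*b*b*b + (118300:ℚ)*a + (296350:ℚ)*a*b + (161050:ℚ)*a*b*b + (32550:ℚ)*a*b*b*b + (2250:ℚ)*a*b*b*b*b + (119700:ℚ)*a*a + (216400:ℚ)*a*a*b + (77100:ℚ)*a*a*b*b + (7700:ℚ)*a*a*b*b*b + (61000:ℚ)*a*a*a + (69800:ℚ)*a*a*a*b + (12200:ℚ)*a*a*a*b*b + (15600:ℚ)*a*a*a*a + (8400:ℚ)*a*a*a*a*b + (1600:ℚ)*a*a*a*a*a)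
              * N (n-1) (k+1) := by
        rw [ea', eb', hcdef]; ring
      rw [hid]
      have t1 : (0:ℚ) ≤ (4*((k:ℚ)+1)*c*((n:ℚ)+(k:ℚ)-3)*(((n:ℚ)+(k:ℚ)-2)*(5*(n:ℚ)+5*(k:ℚ)-10)*((n:ℚ)+(k:ℚ)-4)))
          * (4 * N (n-1) k - (5*(n:ℚ)+5*(k:ℚ)-15) * N (n-2) k) :=
        mul_nonneg (mul_nonneg (mul_nonneg (mul_nonneg (mul_nonneg (by norm_num : (0:ℚ) ≤ 4) pK.le) hc) pB.le) pCDE.le) hF3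
      have t2 : (0:ℚ) ≤ (((k:ℚ)+1)*(5*(n:ℚ)+5*(k:ℚ)-15)*((n:ℚ)+(k:ℚ)-3)*(((n:ℚ)+(k:ℚ)-2)*(5*(n:ℚ)+5*(k:ℚ)-10)*((n:ℚ)+(k:ℚ)-4)))
          * (4 * N n k - (5*(n:ℚ)+5*(k:ℚ)-10) * N (n-1) k) :=
        mul_nonneg (mul_nonneg (mul_nonneg (mul_nonneg pK.le pA.le) pB.le) pCDE.le) hF2
      have t3 : (0:ℚ) ≤ (12*(k:ℚ)*((k:ℚ)+1)*(5*(n:ℚ)+5*(k:ℚ)-15)*((n:ℚ)+(k:ℚ)-3))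
          * (4 * N n (k+1) - ((n:ℚ)+(k:ℚ)-2)*(5*(n:ℚ)+5*(k:ℚ)-10)*((n:ℚ)+(k:ℚ)-4) * N (n-1) (k-1)) :=
        mul_nonneg (mul_nonneg (mul_nonneg (mul_nonneg (mul_nonneg (by norm_num : (0:ℚ) ≤ 12) hk0) pK.le) pA.le) pB.le) hFA
      have t4 : (0:ℚ) ≤ ((358080:ℚ) + (503040:ℚ)*b + (290780:ℚ)*b*b + (88650:ℚ)*b*b*b + (15050:ℚ)*b*b*b*b + (1350:ℚ)*b*b*b*b*b + (50:ℚ)*b*b*b*b*b*b + (1003200:ℚ)*a + (1161680:ℚ)*a*b + (531720:ℚ)*a*b*b + (120400:ℚ)*a*b*b*b + (13500:ℚ)*a*b*b*b*b + (600:ℚ)*a*b*b*b*b*b + (1159280:ℚ)*a*a + (1062600:ℚ)*a*a*b + (361140:ℚ)*a*a*b*b + (54000:ℚ)*a*a*b*b*b + (3000:ℚ)*a*a*b*b*b*b + (707520:ℚ)*a*a*a + (481360:ℚ)*a*a*a*b + (108000:ℚ)*a*a*a*b*b + (8000:ℚ)*a*a*a*b*b*b + (240560:ℚ)*a*a*a*a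 + (108000:ℚ)*a*a*a*a*b + (12000:ℚ)*a*a*a*a*b*b + (43200:ℚ)*a*a*a*a*a + (9600:ℚ)*a*a*a*a*a*b + (3200:ℚ)*a*a*a*a*a*a)
          * (4 * N n (k+1) - (5*(n:ℚ)+5*(k:ℚ)-5) * N (n-1) (k+1)) :=
        mul_nonneg halpha4 hF1
      have t5 : (0:ℚ) ≤ (((k:ℚ)+1)*(6*(5*(n:ℚ)+5*(k:ℚ)-15)+20*((n:ℚ)+(k:ℚ)))*(((n:ℚ)+(k:ℚ)-2)*(5*(n:ℚ)+5*(k:ℚ)-10)*((n:ℚ)+(k:ℚ)-4)))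
          * (N (n-1) (k+1) - ((n:ℚ)+(k:ℚ)-3) * N (n-1) k) :=
        mul_nonneg (mul_nonneg (mul_nonneg pK.le (by linarith : (0:ℚ) ≤ 6*(5*(n:ℚ)+5*(k:ℚ)-15)+20*((n:ℚ)+(k:ℚ)))) pCDE.le) hF4
      have t6 : (0:ℚ) ≤ ((47400:ℚ) + (151100:ℚ)*b + (111050:ℚ)*b*b + (34050:ℚ)*b*b*b + (4750:ℚ)*b*b*b*b + (250:ℚ)*b*b*b*b*b + (118300:ℚ)*a + (296350:ℚ)*a*b + (161050:ℚ)*a*b*b + (32550:ℚ)*a*b*b*b + (2250:ℚ)*a*b*b*b*b + (119700:ℚ)*a*a + (216400:ℚ)*a*a*b + (77100:ℚ)*a*a*b*b + (7700:ℚ)*a*a*b*b*b + (61000:ℚ)*a*a*a + (69800:ℚ)*a*a*a*b + (12200:ℚ)*a*a*a*b*b + (15600:ℚ)*a*a*a*a + (8400:ℚ)*a*a*a*a*b + (1600:ℚ)*a*a*a*a*a)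
          * N (n-1) (k+1) :=
        mul_nonneg hsig hB0
      linarith
    have key2 := (mul_nonneg_iff_of_pos_left hM).mp key
    -- glue: tail bound with choose-2 rewrite
    have htail' : -(3*((k:ℚ)+1)*(k:ℚ) * N (n-1) (k-1)) ≤ ∑ d ∈ Finset.Icc 2 (k+1),
        (((k+1).choose d : ℚ)) * ddf (2*d-1) *
          ((c+1) * N (n-d) (k+1-d) - N (n-d+1) (k+1-d) - c * N (n-d-1) (k+1-d)) := by
      have : 2 * ((((k+1).choose 2 : ℚ)) * 3) * N (n-1) (k-1)
          = 3*((k:ℚ)+1)*(k:ℚ) * N (n-1) (k-1) := by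
        linear_combination (3 * N (n-1) (k-1)) * hch2
      linarith [htail, this ▸ htail]
    push_cast
    linarith [key2, htail']
end step5

lemma N32 : N 3 2 = 3 := by
  rw [N]; norm_num [N, ddf, Finset.Icc_self]

lemma N42 : N 4 2 = 20 := by
  rw [N]; norm_num [N, ddf, Finset.Icc_self]

lemma N52 : N 5 2 = 189 := by
  rw [N]; norm_num [N, ddf, Finset.Icc_self]

theorem good : ∀ K, Good K := by
  intro K
  induction K using Nat.strong_induction_on with
  | _ K ih =>
    rcases K with _ | _ | k
    · exact good0
    · exact good1
    · have Pih : ∀ j m : ℕ, j < k+2 → j+2 ≤ m → 0 < N m j :=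
        fun j m h1 h2 => (ih j h1).1 m h2
      have Hih : ∀ j m : ℕ, j+1 < k+2 → j+3 ≤ m → ((m:ℚ)+(j:ℚ)-2) * N m j ≤ N m (j+1) := by
        intro j m h1 h2
        have h := (ih (j+1) h1).2.1 m j rfl (by omega)
        push_cast at h ⊢
        linarith
      have Rih : ∀ j m : ℕ, j < k+2 → j+3 ≤ m → 5 ≤ m →
          (5*((m:ℚ)+(j:ℚ))-10) * N (m-1) j ≤ 4 * N m j :=
        fun j m h1 h2 h3 => (ih j h1).2.2.1 m h2 h3
      have Vih : ∀ j m : ℕ, j < k+2 → j+2 ≤ m →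
          (2*((m:ℚ)+(j:ℚ))-5) * N (m-1) j ≤ 2 * N m j :=
        fun j m h1 h2 => (ih j h1).2.2.2 m h2
      refine ⟨?_, ?_, ?_, ?_⟩
      · intro n hn
        have hH := Hstep Hih Vih Pih (by omega : k+4 ≤ n)
        have hp := Pih (k+1) n (by omega) (by omega)
        have hc : (0:ℚ) < ((n:ℚ)+(k:ℚ)+2-3) := by
          have h4 : (k:ℚ)+4 ≤ (n:ℚ) := by exact_mod_cast hn
          have := (Nat.cast_nonneg (α := ℚ) k)
          linarith
        nlinarith [hH, hp, hc]
      · intro n j hj hn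
        have hj' : j = k+1 := by omega
        subst hj'
        have h := Hstep Hih Vih Pih (by omega : k+4 ≤ n)
        push_cast at h ⊢
        linarith
      · intro n h1 h2
        rcases Nat.lt_or_ge n 6 with h6 | h6
        · have hn5 : n = 5 := by omega
          have hk0 : k = 0 := by omega
          subst hn5; subst hk0
          have e1 : (5:ℕ)-1 = 4 := rfl
          rw [e1, N42, N52]
          push_cast
          norm_num
        · have h := Rstep Hih Vih Pih Rih (by omega) h6
          push_cast at h ⊢
          linarith
      · intro n hn
        rcases Nat.lt_or_ge n 5 with h5 | h5
        · have hn4 : n = 4 := by omega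
          have hk0 : k = 0 := by omega
          subst hn4; subst hk0
          have e1 : (4:ℕ)-1 = 3 := rfl
          rw [e1, N32, N42]
          push_cast
          norm_num
        · have h := Vstep Hih Vih Pih Rih (by omega) h5
          push_cast at h ⊢
          linarith

/-- For `n ≥ 3` and `0 ≤ k ≤ n - 2`, `N(n,k) ≥ (n + k - 5/2) N(n-1,k)`. -/
theorem N_vertical_bound (n k : ℕ) (hn : 3 ≤ n) (hk : k ≤ n - 2) :
    N n k ≥ ((n : ℚ) + k - 5 / 2) * N (n - 1) k := by
  have h := (good k).2.2.2 n (by omega)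
  rw [ge_iff_le]
  nlinarith [h]
end

section
/- For all integers n ≥ 2 and 0 ≤ k ≤ n, one has 1GN(n,k) ≤ C(n,k)·((n+k−2)!/(2n−2)!)·1GN(n,n). -/
/-- weights -/
noncomputable def w (d : ℕ) : ℚ := ddf (2 * d - 1)

lemma ddf_nonneg : ∀ n, 0 ≤ ddf n := by
  intro n
  induction n using ddf.induct with
  | case1 => rw [ddf]; norm_num
  | case2 => rw [ddf]; norm_num
  | case3 n ih => rw [ddf]; positivity

lemma w_zero : w 0 = 1 := by simp [w, ddf]
lemma w_one : w 1 = 1 := by simp [w]; rfl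
lemma w_nonneg (d : ℕ) : 0 ≤ w d := ddf_nonneg _
lemma w_succ (e : ℕ) : w (e+1) = (2*(e:ℚ)+1) * w e := by
  cases e with
  | zero => simp [w_zero, w_one]
  | succ f =>
    show ddf (2*(f+2) - 1) = _ * ddf (2*(f+1)-1)
    have h1 : 2*(f+2) - 1 = (2*(f+1)-1) + 2 := by omega
    rw [h1, ddf]
    have h2 : ((2*(f+1)-1 : ℕ) : ℚ) + 2 = 2*((f:ℚ)+1)+1 := by
      have : (1:ℕ) ≤ 2*(f+1) := by omega
      push_cast [this]
      ring
    rw [h2]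
    push_cast
    ring

lemma N_zero (m : ℕ) : N m 0 = ddf (2*m - 5) := by rw [N]
lemma N_one (m : ℕ) : N m 1 = ((m:ℚ) - 2) * ddf (2*m - 5) := by rw [N]

/-- row step at level 0 : N(m+1,0) = (2m-3)·N(m,0) for m ≥ 2 -/
lemma NB0 (m : ℕ) (hm : 2 ≤ m) : N (m+1) 0 = (2*(m:ℚ)-3) * N m 0 := by
  rw [N_zero, N_zero]
  rcases Nat.lt_or_ge m 3 with h | h
  · interval_cases m
    · norm_num [ddf]
  · have h1 : 2*(m+1) - 5 = (2*m-5) + 2 := by omega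
    have h2 : ((2*m-5 : ℕ) : ℚ) + 2 = 2*(m:ℚ) - 3 := by
      have : (5:ℕ) ≤ 2*m := by omega
      push_cast [this]
      ring
    rw [h1, ddf, h2]

/-- the convolution sum -/
noncomputable def S (K m : ℕ) : ℚ :=
  ∑ d ∈ Finset.range (K+1), (K.choose d : ℚ) * w d * N (m+1-d) (K-d)

lemma S_zero (m : ℕ) : S 0 m = N (m+1) 0 := by
  simp [S, w_zero]

/-- helper : Icc 1 J sums as range sums -/
lemma sum_Icc_one (J : ℕ) (f : ℕ → ℚ) :
    ∑ d ∈ Finset.Icc 1 J, f d = ∑ i ∈ Finset.range J, f (i+1) := by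
  rw [← Finset.Ico_add_one_right_eq_Icc, Finset.sum_Ico_eq_sum_range]
  simp [add_comm]

/-- the recurrence in S-form : for J ≥ 1, n ≥ J+1,
2·N(n,J+1) = 2(n+J-2)·N(n,J) + 2J·N(n,J-1) + (S J (n-1) - N n J) - (S J n - N (n+1) J) -/
lemma recur_S (J n : ℕ) (hJ : 1 ≤ J) (hn : J + 1 ≤ n) :
    2 * N n (J+1) = 2*((n:ℚ)+J-2) * N n J + 2*(J:ℚ) * N n (J-1)
      + (S J (n-1) - N n J) - (S J n - N (n+1) J) := by
  obtain ⟨k, rfl⟩ : ∃ k, J = k + 1 := ⟨J - 1, by omega⟩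
  rw [show k + 1 + 1 = k + 2 from rfl, N]
  have hsplit : ∑ d ∈ Finset.Icc 1 (k + 1),
      (((k + 1).choose d : ℚ)) * ddf (2 * d - 1) *
        (N (n - d) (k + 1 - d) - N (n - d + 1) (k + 1 - d))
      = (S (k+1) (n-1) - N n (k+1)) - (S (k+1) n - N (n+1) (k+1)) := by
    have e1 : S (k+1) (n-1) - N n (k+1)
        = ∑ d ∈ Finset.Icc 1 (k+1), ((k+1).choose d : ℚ) * w d * N (n-d) (k+1-d) := by
      rw [S, Finset.sum_range_succ']
      rw [sum_Icc_one]
      have h0 : (n - 1 + 1 - 0) = n := by omega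
      simp only [h0, Nat.choose_zero_right, Nat.cast_one, w_zero, Nat.sub_zero]
      have hcong : ∀ i ∈ Finset.range (k+1),
          ((k+1).choose (i+1) : ℚ) * w (i+1) * N (n-1+1-(i+1)) (k+1-(i+1))
          = ((k+1).choose (i+1) : ℚ) * w (i+1) * N (n-(i+1)) (k+1-(i+1)) := by
        intro i hi
        congr 2
        omega
      rw [Finset.sum_congr rfl hcong]
      ring
    have e2 : S (k+1) n - N (n+1) (k+1)
        = ∑ d ∈ Finset.Icc 1 (k+1), ((k+1).choose d : ℚ) * w d * N (n-d+1) (k+1-d) := by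
      rw [S, Finset.sum_range_succ']
      rw [sum_Icc_one]
      simp only [Nat.choose_zero_right, Nat.cast_one, w_zero, Nat.sub_zero]
      have hcong : ∀ i ∈ Finset.range (k+1),
          ((k+1).choose (i+1) : ℚ) * w (i+1) * N (n+1-(i+1)) (k+1-(i+1))
          = ((k+1).choose (i+1) : ℚ) * w (i+1) * N (n-(i+1)+1) (k+1-(i+1)) := by
        intro i hi
        have hik : i ≤ k := Finset.mem_range_succ_iff.mp hi
        congr 2
        omega
      rw [Finset.sum_congr rfl hcong]
      ring
    rw [e1, e2, ← Finset.sum_sub_distrib]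
    apply Finset.sum_congr rfl
    intro d hd
    show ((k+1).choose d : ℚ) * ddf (2*d-1) * _ = _
    rw [show ddf (2*d-1) = w d from rfl]
    ring
  rw [hsplit]
  rw [show k + 1 - 1 = k from rfl]
  push_cast
  ring

/-- local recurrence, given the two ID3 facts -/
lemma LR (J n : ℕ) (hJ : 1 ≤ J) (hn : J+2 ≤ n)
    (h1 : S J (n-1) = (2*((n-1 : ℕ):ℚ)+2*(J:ℚ)-3) * N (n-1) J + 2*(J:ℚ)*N (n-1) (J-1))
    (h2 : S J n = (2*(n:ℚ)+2*(J:ℚ)-3) * N n J + 2*(J:ℚ)*N n (J-1)) :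
    2 * N n (J+1) = -2*N n J + (2*(n:ℚ)+2*(J:ℚ)-5)*N (n-1) J
      + 2*(J:ℚ)*N (n-1) (J-1) + N (n+1) J := by
  have hc : ((n-1 : ℕ):ℚ) = (n:ℚ) - 1 := by
    have h1n : 1 ≤ n := by omega
    push_cast [h1n]; ring
  linear_combination recur_S J n hJ (by omega) + h1 - h2 + 2*N (n-1) J * hc

/-- ID2 form, given ID3 at (J,n) -/
lemma ID2' (J n : ℕ) (hJ : 1 ≤ J) (hn : J+1 ≤ n)
    (h2 : S J n = (2*(n:ℚ)+2*(J:ℚ)-3) * N n J + 2*(J:ℚ)*N n (J-1)) :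
    2 * N n (J+1) = N (n+1) J - 2*N n J + S J (n-1) := by
  linear_combination recur_S J n hJ hn - h2

lemma ID2zero (n : ℕ) (hn : 2 ≤ n) :
    2 * N n 1 = N (n+1) 0 - 2*N n 0 + S 0 (n-1) := by
  have h1 : S 0 (n-1) = N n 0 := by
    rw [S_zero]
    congr 1
    omega
  rw [h1, NB0 n hn, N_one, N_zero]
  ring

/-- boundary bracket vanishes -/
lemma Wbr_zero (q : ℕ) (hq : 2 ≤ q) :
    2*N (q+1) 1 + 2*N (q+1) 0 + (3-2*(q:ℚ))*N q 0 - N (q+2) 0 = 0 := by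
  have h1 := NB0 q hq
  have h2 := NB0 (q+1) (by omega)
  have h3 : N (q+1) 1 = ((q:ℚ)-1) * N (q+1) 0 := by
    rw [N_one, N_zero]; push_cast; ring
  have h2' : N (q+2) 0 = (2*((q:ℚ)+1)-3) * N (q+1) 0 := by
    rw [show q+2 = q+1+1 from rfl, h2]; push_cast; ring
  rw [h3, h2', h1]
  ring

/-- (k-d)·C(k,d) = k·C(k-1,d) -/
lemma choose_aux (k d : ℕ) (hk : 1 ≤ k) : (k-d) * k.choose d = k * (k-1).choose d := by
  have h1 := Nat.choose_succ_right_eq k d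
  have h2 := Nat.add_one_mul_choose_eq (k-1) d
  have h3 : (k-1).succ = k := by omega
  rw [show k-1+1 = k from h3] at h2
  rw [mul_comm, ← h1, ← h2]

/-- (f+1)·C(k,f+1) = k·C(k-1,f) -/
lemma choose_aux2 (k f : ℕ) (hk : 1 ≤ k) : (f+1) * k.choose (f+1) = k * (k-1).choose f := by
  have h2 := Nat.add_one_mul_choose_eq (k-1) f
  have h3 : (k-1).succ = k := by omega
  rw [show k-1+1 = k from h3] at h2
  rw [mul_comm]
  exact h2.symm

theorem ID3 : ∀ K, ∀ m : ℕ, K+1 ≤ m → 2 ≤ m →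
    S K m = (2*(m:ℚ)+2*(K:ℚ)-3) * N m K + 2*(K:ℚ)*N m (K-1) := by
  intro K
  induction K using Nat.strong_induction_on with
  | _ K ih =>
    match K with
    | 0 =>
      intro m hm hm2
      rw [S_zero, NB0 m hm2]
      push_cast
      ring
    | 1 =>
      intro m hm hm2
      have h1 : S 1 m = N (m+1) 1 + N m 0 := by
        rw [S, Finset.sum_range_succ, Finset.sum_range_succ, Finset.sum_range_zero]
        rw [w_zero, w_one]
        have e1 : m + 1 - 1 = m := by omega
        rw [e1]
        simp [Nat.choose_zero_right, Nat.choose_self]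
      have h2 : N (m+1) 1 = ((m:ℚ)-1) * N (m+1) 0 := by
        rw [N_one, N_zero]; push_cast; ring
      have h3 := NB0 m hm2
      have h4 : N m 1 = ((m:ℚ)-2) * N m 0 := by rw [N_one, N_zero]
      push_cast
      linear_combination h1 + h2 + ((m:ℚ)-1)*h3 - (2*(m:ℚ)-1)*h4
    | (κ+2) =>
      intro m hm hm2
      obtain ⟨k, hk⟩ : ∃ k, k = κ + 1 := ⟨κ+1, rfl⟩
      have hK2 : κ + 2 = k + 1 := by omega
      rw [hK2] at ih ⊢
      rw [show k+1-1 = k from by omega]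
      have hk1 : 1 ≤ k := by omega
      have hmk : k + 2 ≤ m := by omega
      -- IH instances
      have ihk : ∀ m', k+1 ≤ m' →
          S k m' = (2*(m':ℚ)+2*(k:ℚ)-3) * N m' k + 2*(k:ℚ)*N m' (k-1) :=
        fun m' h => ih k (by omega) m' h (by omega)
      have ihk1 : ∀ m', k ≤ m' → 2 ≤ m' →
          S (k-1) m' = (2*(m':ℚ)+2*((k-1:ℕ):ℚ)-3) * N m' (k-1) + 2*((k-1:ℕ):ℚ)*N m' (k-1-1) :=
        fun m' h h2 => ih (k-1) (by omega) m' (by omega) h2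
      have hq2 : 2 ≤ m - k := by omega
      -- helper : the d-weighted sum equals k·T
      have hT : ∑ i ∈ Finset.range (k+1), (i:ℚ) * ((k.choose i : ℚ) * w i * N (m-i) (k-i))
          = (k:ℚ) * ∑ f ∈ Finset.range k, ((k-1).choose f : ℚ) * w (f+1) * N (m-1-f) (k-1-f) := by
        rw [Finset.sum_range_succ', Finset.mul_sum]
        simp only [Nat.cast_zero, zero_mul, add_zero]
        apply Finset.sum_congr rfl
        intro f hf
        have e1 : m - (f+1) = m-1-f := by omega
        have e2 : k - (f+1) = k-1-f := by omega
        rw [e1, e2]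
        have hc := choose_aux2 k f hk1
        have hc' : (((f+1) * k.choose (f+1) : ℕ) : ℚ) = ((k * (k-1).choose f : ℕ) : ℚ) := by
          exact_mod_cast congrArg (Nat.cast : ℕ → ℚ) hc
        push_cast at hc'
        push_cast
        linear_combination (w (f+1) * N (m-1-f) (k-1-f)) * hc'
      -- split S (k+1) m = A + B
      have hAeq : (∑ d ∈ Finset.range (k+1), (k.choose d : ℚ) * w d * N (m+1-d) (k+1-d))
          = (∑ i ∈ Finset.range (k+1), (k.choose (i+1) : ℚ) * w (i+1) * N (m-i) (k-i))
            + N (m+1) (k+1) := by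
        rw [Finset.sum_range_succ']
        congr 1
        · rw [Finset.sum_range_succ]
          rw [Nat.choose_eq_zero_of_lt (show k < k+1 by omega)]
          simp only [Nat.cast_zero, zero_mul, add_zero]
          exact Finset.sum_congr rfl (fun i hi => by
            rw [show m+1-(i+1) = m-i from by omega, show k+1-(i+1) = k-i from by omega])
        · simp [w_zero]
      have hSAB : S (k+1) m
          = (∑ d ∈ Finset.range (k+1), (k.choose d : ℚ) * w d * N (m+1-d) (k+1-d))
            + ∑ i ∈ Finset.range (k+1), (k.choose i : ℚ) * w (i+1) * N (m-i) (k-i) := by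
        rw [S, Finset.sum_range_succ']
        have hsplit : ∀ i ∈ Finset.range (k+1),
            ((k+1).choose (i+1) : ℚ) * w (i+1) * N (m+1-(i+1)) (k+1-(i+1))
            = (k.choose (i+1) : ℚ) * w (i+1) * N (m-i) (k-i)
              + (k.choose i : ℚ) * w (i+1) * N (m-i) (k-i) := by
          intro i hi
          have e1 : m+1-(i+1) = m-i := by omega
          have e2 : k+1-(i+1) = k-i := by omega
          rw [e1, e2, Nat.choose_succ_succ]
          push_cast
          ring
        rw [Finset.sum_congr rfl hsplit, Finset.sum_add_distrib, hAeq]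
        have hf0 : ((k+1).choose 0 : ℚ) * w 0 * N (m+1-0) (k+1-0) = N (m+1) (k+1) := by
          simp [w_zero]
        rw [hf0]
        ring
      -- A : peel d = k
      have hApeel : (∑ d ∈ Finset.range (k+1), (k.choose d : ℚ) * w d * N (m+1-d) (k+1-d))
          = (∑ d ∈ Finset.range k, (k.choose d : ℚ) * w d * N (m+1-d) (k+1-d))
            + w k * N (m+1-k) 1 := by
        rw [Finset.sum_range_succ]
        have e1 : k+1-k = 1 := by omega
        rw [e1, Nat.choose_self]
        push_cast
        ring
      -- B evaluation
      have hB : (∑ i ∈ Finset.range (k+1), (k.choose i : ℚ) * w (i+1) * N (m-i) (k-i))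
          = S k (m-1)
            + 2*(k:ℚ) * ∑ f ∈ Finset.range k, ((k-1).choose f : ℚ) * w (f+1) * N (m-1-f) (k-1-f) := by
        have hw : ∀ i ∈ Finset.range (k+1),
            (k.choose i : ℚ) * w (i+1) * N (m-i) (k-i)
            = (k.choose i : ℚ) * w i * N (m-i) (k-i)
              + 2 * ((i:ℚ) * ((k.choose i : ℚ) * w i * N (m-i) (k-i))) := by
          intro i hi
          rw [w_succ]
          ring
        rw [Finset.sum_congr rfl hw, Finset.sum_add_distrib]
        have hS1 : ∑ i ∈ Finset.range (k+1), (k.choose i : ℚ) * w i * N (m-i) (k-i)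
            = S k (m-1) := by
          rw [S]
          apply Finset.sum_congr rfl
          intro i hi
          have e1 : m - 1 + 1 - i = m - i := by omega
          rw [e1]
        rw [hS1, ← Finset.mul_sum, hT]
        ring
      -- A evaluation : peel d = k, apply LR inside
      have hApeel : (∑ d ∈ Finset.range (k+1), (k.choose d : ℚ) * w d * N (m+1-d) (k+1-d))
          = (∑ d ∈ Finset.range k, (k.choose d : ℚ) * w d * N (m+1-d) (k+1-d))
            + w k * N (m+1-k) 1 := by
        rw [Finset.sum_range_succ]
        have e1 : k+1-k = 1 := by omega
        rw [e1, Nat.choose_self]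
        push_cast
        ring
      have hLRd : ∀ d ∈ Finset.range k,
          2 * ((k.choose d : ℚ) * w d * N (m+1-d) (k+1-d))
          = (k.choose d : ℚ) * w d *
              (-2*N (m+1-d) (k-d) + (2*(m:ℚ)+2*(k:ℚ)-4*(d:ℚ)-3)*N (m-d) (k-d)
                + 2*((k:ℚ)-(d:ℚ))*N (m-d) (k-d-1) + N (m+2-d) (k-d)) := by
        intro d hd
        have hdk : d < k := Finset.mem_range.mp hd
        have e0 : k+1-d = (k-d)+1 := by omega
        have e1 : (m+1-d) - 1 = m-d := by omega
        have e2 : (m+1-d) + 1 = m+2-d := by omega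
        have hJ : 1 ≤ k - d := by omega
        have hn : (k-d) + 2 ≤ m+1-d := by omega
        have h1 : S (k-d) ((m+1-d)-1)
            = (2*(((m+1-d)-1 : ℕ):ℚ)+2*((k-d:ℕ):ℚ)-3) * N ((m+1-d)-1) (k-d)
              + 2*((k-d:ℕ):ℚ)*N ((m+1-d)-1) ((k-d)-1) := by
          rw [e1]
          exact ih (k-d) (by omega) (m-d) (by omega) (by omega)
        have h2 : S (k-d) (m+1-d)
            = (2*((m+1-d:ℕ):ℚ)+2*((k-d:ℕ):ℚ)-3) * N (m+1-d) (k-d)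
              + 2*((k-d:ℕ):ℚ)*N (m+1-d) ((k-d)-1) := by
          exact ih (k-d) (by omega) (m+1-d) (by omega) (by omega)
        have hlr := LR (k-d) (m+1-d) hJ hn h1 h2
        rw [e0]
        rw [e1, e2] at hlr
        have c1 : ((m+1-d : ℕ):ℚ) = (m:ℚ)+1-(d:ℚ) := by
          have : d ≤ m+1 := by omega
          push_cast [this]; ring
        have c2 : ((k-d : ℕ):ℚ) = (k:ℚ)-(d:ℚ) := by
          have : d ≤ k := by omega
          push_cast [this]; ring
        have e3 : (k-d) - 1 = k-d-1 := rfl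
        rw [c1, c2] at hlr
        linear_combination ((k.choose d : ℚ) * w d) * hlr
      have hA2 : 2 * (∑ d ∈ Finset.range k, (k.choose d : ℚ) * w d * N (m+1-d) (k+1-d))
          = -2 * (∑ d ∈ Finset.range k, (k.choose d : ℚ) * w d * N (m+1-d) (k-d))
            + ∑ d ∈ Finset.range k, (k.choose d : ℚ) * w d * (2*(m:ℚ)+2*(k:ℚ)-4*(d:ℚ)-3) * N (m-d) (k-d)
            + 2 * ∑ d ∈ Finset.range k, (k.choose d : ℚ) * w d * ((k:ℚ)-(d:ℚ)) * N (m-d) (k-d-1)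
            + ∑ d ∈ Finset.range k, (k.choose d : ℚ) * w d * N (m+2-d) (k-d) := by
        rw [Finset.mul_sum, Finset.sum_congr rfl hLRd]
        rw [Finset.mul_sum, Finset.mul_sum]
        rw [← Finset.sum_add_distrib, ← Finset.sum_add_distrib, ← Finset.sum_add_distrib]
        exact Finset.sum_congr rfl (fun d hd => by ring)
      -- evaluate the four A-sums
      have hSa : (∑ d ∈ Finset.range k, (k.choose d : ℚ) * w d * N (m+1-d) (k-d))
          = S k m - w k * N (m+1-k) 0 := by
        have h : S k m = (∑ d ∈ Finset.range k, (k.choose d : ℚ) * w d * N (m+1-d) (k-d))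
            + w k * N (m+1-k) 0 := by
          rw [S, Finset.sum_range_succ, Nat.choose_self, Nat.sub_self]
          push_cast
          ring
        linear_combination - h
      have hSb1 : (∑ d ∈ Finset.range k, (k.choose d : ℚ) * w d * N (m-d) (k-d))
          = S k (m-1) - w k * N (m-k) 0 := by
        have h : S k (m-1) = (∑ d ∈ Finset.range k, (k.choose d : ℚ) * w d * N (m-d) (k-d))
            + w k * N (m-k) 0 := by
          rw [S, Finset.sum_range_succ, Nat.choose_self, Nat.sub_self]
          rw [show m-1+1-k = m-k from by omega]
          have hc : ∀ d ∈ Finset.range k, (k.choose d : ℚ) * w d * N (m-1+1-d) (k-d)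
              = (k.choose d : ℚ) * w d * N (m-d) (k-d) := by
            intro d hd
            rw [show m-1+1-d = m-d from by omega]
          rw [Finset.sum_congr rfl hc]
          push_cast
          ring
        linear_combination - h
      have hSb2 : (∑ d ∈ Finset.range k, (d:ℚ) * ((k.choose d : ℚ) * w d * N (m-d) (k-d)))
          = (k:ℚ) * (∑ f ∈ Finset.range k, ((k-1).choose f : ℚ) * w (f+1) * N (m-1-f) (k-1-f))
            - (k:ℚ) * (w k * N (m-k) 0) := by
        have h := hT
        rw [Finset.sum_range_succ, Nat.choose_self, Nat.sub_self] at h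
        push_cast at h
        linear_combination h
      have hSb : (∑ d ∈ Finset.range k,
            (k.choose d : ℚ) * w d * (2*(m:ℚ)+2*(k:ℚ)-4*(d:ℚ)-3) * N (m-d) (k-d))
          = (2*(m:ℚ)+2*(k:ℚ)-3) * (S k (m-1) - w k * N (m-k) 0)
            - 4 * ((k:ℚ) * (∑ f ∈ Finset.range k, ((k-1).choose f : ℚ) * w (f+1) * N (m-1-f) (k-1-f))
                    - (k:ℚ) * (w k * N (m-k) 0)) := by
        have hsplit : ∀ d ∈ Finset.range k,
            (k.choose d : ℚ) * w d * (2*(m:ℚ)+2*(k:ℚ)-4*(d:ℚ)-3) * N (m-d) (k-d)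
            = (2*(m:ℚ)+2*(k:ℚ)-3) * ((k.choose d : ℚ) * w d * N (m-d) (k-d))
              - 4 * ((d:ℚ) * ((k.choose d : ℚ) * w d * N (m-d) (k-d))) := by
          intro d hd
          ring
        rw [Finset.sum_congr rfl hsplit, Finset.sum_sub_distrib, ← Finset.mul_sum, ← Finset.mul_sum]
        rw [hSb1, hSb2]
      have hSc : (∑ d ∈ Finset.range k, (k.choose d : ℚ) * w d * ((k:ℚ)-(d:ℚ)) * N (m-d) (k-d-1))
          = (k:ℚ) * S (k-1) (m-1) := by
        rw [S, Finset.mul_sum]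
        rw [show (k-1)+1 = k from by omega]
        apply Finset.sum_congr rfl
        intro d hd
        have hdk : d < k := Finset.mem_range.mp hd
        have e1 : m-1+1-d = m-d := by omega
        have e2 : k-1-d = k-d-1 := by omega
        rw [e1, e2]
        have hc := choose_aux k d hk1
        have hc' : (((k-d) * k.choose d : ℕ) : ℚ) = ((k * (k-1).choose d : ℕ) : ℚ) := by
          exact_mod_cast congrArg (Nat.cast : ℕ → ℚ) hc
        push_cast [show d ≤ k from by omega] at hc'
        linear_combination (w d * N (m-d) (k-d-1)) * hc'
      have hSd : (∑ d ∈ Finset.range k, (k.choose d : ℚ) * w d * N (m+2-d) (k-d))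
          = S k (m+1) - w k * N (m+2-k) 0 := by
        have h : S k (m+1) = (∑ d ∈ Finset.range k, (k.choose d : ℚ) * w d * N (m+2-d) (k-d))
            + w k * N (m+2-k) 0 := by
          rw [S, Finset.sum_range_succ, Nat.choose_self, Nat.sub_self]
          rw [show m+1+1-k = m+2-k from by omega]
          have hc : ∀ d ∈ Finset.range k, (k.choose d : ℚ) * w d * N (m+1+1-d) (k-d)
              = (k.choose d : ℚ) * w d * N (m+2-d) (k-d) := by
            intro d hd
            rw [show m+1+1-d = m+2-d from by omega]
          rw [Finset.sum_congr rfl hc]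
          push_cast
          ring
        linear_combination - h
      -- boundary bracket
      have hcast : ((m-k : ℕ):ℚ) = (m:ℚ)-(k:ℚ) := by
        push_cast [show k ≤ m from by omega]; ring
      have hW : 2*N (m+1-k) 1 + 2*N (m+1-k) 0 + (3-2*((m:ℚ)-(k:ℚ)))*N (m-k) 0
          - N (m+2-k) 0 = 0 := by
        have h := Wbr_zero (m-k) hq2
        rw [show m-k+1 = m+1-k from by omega, show m-k+2 = m+2-k from by omega, hcast] at h
        exact h
      -- total
      have Htot : 2 * S (k+1) m = -2*S k m + (2*(m:ℚ)+2*(k:ℚ)-1)*S k (m-1)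
          + 2*(k:ℚ)*S (k-1) (m-1) + S k (m+1) := by
        linear_combination 2*hSAB + 2*hApeel + hA2 - 2*hSa + hSb + 2*hSc + hSd + 2*hB
          + (w k)*hW
      -- final assembly
      have hE2 := ihk m (by omega)
      have hE4 := ihk (m+1) (by omega)
      have hID2 : 2*N m (k+1) = N (m+1) k - 2*N m k + S k (m-1) :=
        ID2' k m hk1 (by omega) hE2
      have hE8 : 2*N m k = N (m+1) (k-1) - 2*N m (k-1) + S (k-1) (m-1) := by
        rcases Nat.lt_or_ge k 2 with h2 | h2
        · have hk1' : k = 1 := by omega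
          subst hk1'
          exact ID2zero m hm2
        · have h := ID2' (k-1) m (by omega) (by omega)
            (ih (k-1) (by omega) m (by omega) (by omega))
          rw [show (k-1)+1 = k from by omega] at h
          exact h
      push_cast at hE4 ⊢
      linear_combination (1/2)*Htot - hE2 + (1/2)*hE4
        - ((2*(m:ℚ)+2*(k:ℚ)-1)/2)*hID2 - (k:ℚ)*hE8

/-- Icc 2 (J+1) sums as range sums -/
lemma sum_Icc_two (J : ℕ) (f : ℕ → ℚ) :
    ∑ d ∈ Finset.Icc 2 (J+1), f d = ∑ i ∈ Finset.range J, f (i+2) := by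
  rw [← Finset.Ico_add_one_right_eq_Icc, Finset.sum_Ico_eq_sum_range]
  apply Finset.sum_congr rfl (fun i _ => by rw [Nat.add_comm 2 i])

/-- splitting off the d = 0 term of S K (m-1) -/
lemma S_sub (K m : ℕ) (hm : 1 ≤ m) :
    S K (m-1) = N m K + ∑ d ∈ Finset.Icc 1 K, (K.choose d : ℚ) * w d * N (m-d) (K-d) := by
  rw [S, Finset.sum_range_succ', sum_Icc_one]
  rw [show m-1+1-0 = m from by omega]
  simp only [Nat.choose_zero_right, Nat.cast_one, w_zero, Nat.sub_zero, one_mul]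
  have hc : ∀ i ∈ Finset.range K,
      ((K.choose (i+1) : ℚ)) * w (i+1) * N (m-1+1-(i+1)) (K-(i+1))
      = ((K.choose (i+1) : ℚ)) * w (i+1) * N (m-(i+1)) (K-(i+1)) := by
    intro i hi
    rw [show m-1+1-(i+1) = m-(i+1) from by omega]
  rw [Finset.sum_congr rfl hc]
  ring

/-- splitting off the d = 0 and d = 1 terms of S K m, for K ≥ 1 -/
lemma S_split (K m : ℕ) (hK : 1 ≤ K) :
    S K m = N (m+1) K + (K:ℚ) * N m (K-1)
      + ∑ d ∈ Finset.Icc 2 K, (K.choose d : ℚ) * w d * N (m+1-d) (K-d) := by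
  obtain ⟨J, rfl⟩ : ∃ J, K = J + 1 := ⟨K-1, by omega⟩
  rw [S, Finset.sum_range_succ', Finset.sum_range_succ', sum_Icc_two]
  simp only [Nat.choose_zero_right, Nat.cast_one, w_zero, Nat.sub_zero, one_mul]
  rw [show (0:ℕ)+1 = 1 from rfl, Nat.choose_one_right, w_one]
  rw [show m+1-1 = m from by omega, show J+1-1 = J from by omega]
  have hc : ∀ i ∈ Finset.range J,
      ((J+1).choose (i+1+1) : ℚ) * w (i+1+1) * N (m+1-(i+1+1)) (J+1-(i+1+1))
      = ((J+1).choose (i+2) : ℚ) * w (i+2) * N (m+1-(i+2)) (J+1-(i+2)) := by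
    intro i hi
    norm_num
  rw [Finset.sum_congr rfl hc]
  push_cast
  ring

/-- geometric bound -/
lemma geo_bound : ∀ K : ℕ, ∑ d ∈ Finset.Icc 2 K, ((1:ℚ)/2)^(d-1) ≤ 1 := by
  have key : ∀ K : ℕ, 1 ≤ K → ∑ d ∈ Finset.Icc 2 K, ((1:ℚ)/2)^(d-1) ≤ 1 - (1/2)^(K-1) := by
    intro K hK
    induction K, hK using Nat.le_induction with
    | base => simp
    | succ K hK ihK =>
      rw [Finset.sum_Icc_succ_top (by omega)]
      have h1 : ((1:ℚ)/2)^(K+1-1) = (1/2)^(K-1) * (1/2) := by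
        rw [show K+1-1 = (K-1)+1 from by omega, pow_succ]
      have h2 : ((1:ℚ)/2)^(K-1) ≥ 0 := by positivity
      rw [h1]
      nlinarith [ihK]
  intro K
  rcases Nat.lt_or_ge K 2 with h | h
  · rw [Finset.Icc_eq_empty (by omega)]
    simp
  · calc ∑ d ∈ Finset.Icc 2 K, ((1:ℚ)/2)^(d-1) ≤ 1 - (1/2)^(K-1) := key K (by omega)
      _ ≤ 1 := by
        have h0 : (0:ℚ) ≤ (1/2:ℚ)^(K-1) := by positivity
        linarith

set_option maxHeartbeats 1000000 in
theorem NPC : ∀ K : ℕ, (∀ m, K+1 ≤ m → 0 ≤ N m K)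
    ∧ (∀ m, K+2 ≤ m → (2*(m:ℚ)+2*(K:ℚ)-3) * N m K ≤ N (m+1) K)
    ∧ (∀ m, K+2 ≤ m → ((m:ℚ)+(K:ℚ)-2) * N m K ≤ N m (K+1)) := by
  intro K
  induction K using Nat.strong_induction_on with
  | _ K ih =>
    rcases Nat.eq_zero_or_pos K with hK0 | hKpos
    · subst hK0
      refine ⟨?_, ?_, ?_⟩
      · intro m hm
        rw [N_zero]
        exact ddf_nonneg _
      · intro m hm
        rw [NB0 m (by omega)]
        push_cast
        apply mul_le_mul_of_nonneg_right _ (by rw [N_zero]; exact ddf_nonneg _)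
        norm_num
      · intro m hm
        rw [N_one, N_zero]
        push_cast
        apply le_of_eq
        ring
    · -- K ≥ 1
      have hP : ∀ m, K+1 ≤ m → 0 ≤ N m K := by
        intro m hm
        have hC' := (ih (K-1) (by omega)).2.2 m (by omega)
        have hP' := (ih (K-1) (by omega)).1 m (by omega)
        rw [show K-1+1 = K from by omega] at hC'
        have hco : (0:ℚ) ≤ ((m:ℚ)+((K-1:ℕ):ℚ)-2) := by
          have : (0:ℚ) ≤ ((K-1:ℕ):ℚ) := Nat.cast_nonneg _
          have hm2 : (2:ℚ) ≤ (m:ℚ) := by exact_mod_cast (by omega : 2 ≤ m)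
          linarith
        calc (0:ℚ) ≤ ((m:ℚ)+((K-1:ℕ):ℚ)-2) * N m (K-1) := mul_nonneg hco hP'
          _ ≤ N m K := hC'
      have hB : ∀ m, K+2 ≤ m → (2*(m:ℚ)+2*(K:ℚ)-3) * N m K ≤ N (m+1) K := by
        intro m hm
        -- chain bound
        have hCH : ∀ d, 1 ≤ d → d ≤ K →
            (2:ℚ)^(d-1) * ((K.choose d : ℚ) * w d * N (m+1-d) (K-d)) ≤ (K:ℚ) * N m (K-1) := by
          intro d hd1
          induction d, hd1 using Nat.le_induction with
          | base =>
            intro _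
            rw [Nat.choose_one_right, w_one, show m+1-1 = m from by omega]
            apply le_of_eq
            norm_num
          | succ d hd ihd =>
            intro hdK
            have ihd' := ihd (by omega)
            have hj : K-d-1 < K := by omega
            have c1 := (ih (K-d-1) hj).2.2 (m+1-d) (by omega)
            have c2 := (ih (K-d-1) hj).2.1 (m-d) (by omega)
            have p1 := (ih (K-d-1) hj).1 (m-d) (by omega)
            have p2 := (ih (K-d-1) hj).1 (m+1-d) (by omega)
            rw [show K-d-1+1 = K-d from by omega] at c1
            rw [show m-d+1 = m+1-d from by omega] at c2
            have ca : ((m+1-d:ℕ):ℚ) = (m:ℚ)+1-(d:ℚ) := by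
              push_cast [show d ≤ m+1 from by omega]; ring
            have cb : ((K-d-1:ℕ):ℚ) = (K:ℚ)-(d:ℚ)-1 := by
              rw [show K-d-1 = K-(d+1) from by omega]
              push_cast [show d+1 ≤ K from hdK]; ring
            have cc : ((m-d:ℕ):ℚ) = (m:ℚ)-(d:ℚ) := by
              push_cast [show d ≤ m from by omega]; ring
            rw [ca, cb] at c1
            rw [cc, cb] at c2
            rw [show m+1-(d+1) = m-d from by omega, show K-(d+1) = K-d-1 from by omega,
              show d+1-1 = d from by omega, w_succ]
            -- abbreviations
            have hcp : (0:ℚ) < (K.choose d : ℚ) := by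
              exact_mod_cast Nat.choose_pos (show d ≤ K by omega)
            have hch : ((d:ℚ)+1) * (K.choose (d+1):ℚ) = ((K:ℚ)-(d:ℚ)) * (K.choose d : ℚ) := by
              have h := Nat.choose_succ_right_eq K d
              have h' : ((K.choose (d+1) * (d+1) : ℕ):ℚ) = ((K.choose d * (K-d) : ℕ):ℚ) := by
                exact_mod_cast congrArg (Nat.cast : ℕ → ℚ) h
              push_cast [show d ≤ K from by omega] at h'
              linarith [h']
            have hm' : (K:ℚ)+2 ≤ (m:ℚ) := by exact_mod_cast hm
            have hdK' : (d:ℚ)+1 ≤ (K:ℚ) := by exact_mod_cast hdK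
            have hd' : (1:ℚ) ≤ (d:ℚ) := by exact_mod_cast hd
            -- chained N bound
            have hN1 : ((m:ℚ)+(K:ℚ)-2*(d:ℚ)-2) * ((2*(m:ℚ)+2*(K:ℚ)-4*(d:ℚ)-5) * N (m-d) (K-d-1))
                ≤ N (m+1-d) (K-d) := by
              have hA0 : (0:ℚ) ≤ (m:ℚ)+(K:ℚ)-2*(d:ℚ)-2 := by linarith
              have step1 : ((m:ℚ)+(K:ℚ)-2*(d:ℚ)-2) * ((2*(m:ℚ)+2*(K:ℚ)-4*(d:ℚ)-5) * N (m-d) (K-d-1))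
                  ≤ ((m:ℚ)+(K:ℚ)-2*(d:ℚ)-2) * N (m+1-d) (K-d-1) := by
                apply mul_le_mul_of_nonneg_left _ hA0
                calc (2*(m:ℚ)+2*(K:ℚ)-4*(d:ℚ)-5) * N (m-d) (K-d-1)
                    = (2*((m:ℚ)-(d:ℚ))+2*((K:ℚ)-(d:ℚ)-1)-3) * N (m-d) (K-d-1) := by ring
                  _ ≤ N (m+1-d) (K-d-1) := c2
              calc ((m:ℚ)+(K:ℚ)-2*(d:ℚ)-2) * ((2*(m:ℚ)+2*(K:ℚ)-4*(d:ℚ)-5) * N (m-d) (K-d-1))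
                  ≤ ((m:ℚ)+(K:ℚ)-2*(d:ℚ)-2) * N (m+1-d) (K-d-1) := step1
                _ = ((m:ℚ)+1-(d:ℚ)+((K:ℚ)-(d:ℚ)-1)-2) * N (m+1-d) (K-d-1) := by ring
                _ ≤ N (m+1-d) (K-d) := c1
            -- arithmetic bound
            have harith : 2*(2*(d:ℚ)+1)*(K.choose (d+1):ℚ)
                ≤ (K.choose d:ℚ) * (((m:ℚ)+(K:ℚ)-2*(d:ℚ)-2) * (2*(m:ℚ)+2*(K:ℚ)-4*(d:ℚ)-5)) := by
              have hu : (1:ℚ) ≤ (K:ℚ)-(d:ℚ) := by linarith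
              have hA2 : 2*((K:ℚ)-(d:ℚ)) ≤ (m:ℚ)+(K:ℚ)-2*(d:ℚ)-2 := by linarith
              have hB2 : 4*((K:ℚ)-(d:ℚ))-1 ≤ 2*(m:ℚ)+2*(K:ℚ)-4*(d:ℚ)-5 := by linarith
              have hAB : 6*((K:ℚ)-(d:ℚ)) ≤ ((m:ℚ)+(K:ℚ)-2*(d:ℚ)-2) * (2*(m:ℚ)+2*(K:ℚ)-4*(d:ℚ)-5) := by
                have hmul : (2*((K:ℚ)-(d:ℚ))) * (4*((K:ℚ)-(d:ℚ))-1)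
                    ≤ ((m:ℚ)+(K:ℚ)-2*(d:ℚ)-2) * (2*(m:ℚ)+2*(K:ℚ)-4*(d:ℚ)-5) := by
                  apply mul_le_mul hA2 hB2 (by linarith) (by linarith)
                nlinarith [hu, hmul]
              -- (d+1) * goal
              have hstep : ((d:ℚ)+1) * (2*(2*(d:ℚ)+1)*(K.choose (d+1):ℚ))
                  ≤ ((d:ℚ)+1) * ((K.choose d:ℚ) * (((m:ℚ)+(K:ℚ)-2*(d:ℚ)-2) * (2*(m:ℚ)+2*(K:ℚ)-4*(d:ℚ)-5))) := by
                have e1 : ((d:ℚ)+1) * (2*(2*(d:ℚ)+1)*(K.choose (d+1):ℚ))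
                    = 2*(2*(d:ℚ)+1) * (((K:ℚ)-(d:ℚ)) * (K.choose d : ℚ)) := by
                  linear_combination 2*(2*(d:ℚ)+1) * hch
                rw [e1]
                have h6 : 2*(2*(d:ℚ)+1) * (((K:ℚ)-(d:ℚ)) * (K.choose d : ℚ))
                    ≤ 6*((K:ℚ)-(d:ℚ)) * (((d:ℚ)+1) * (K.choose d : ℚ)) := by
                  nlinarith [mul_nonneg (mul_nonneg (show (0:ℚ) ≤ 2*(d:ℚ)+4 by linarith)
                    (show (0:ℚ) ≤ (K:ℚ)-(d:ℚ) by linarith)) hcp.le]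
                have h7 : 6*((K:ℚ)-(d:ℚ)) * (((d:ℚ)+1) * (K.choose d : ℚ))
                    ≤ (((m:ℚ)+(K:ℚ)-2*(d:ℚ)-2) * (2*(m:ℚ)+2*(K:ℚ)-4*(d:ℚ)-5)) * (((d:ℚ)+1) * (K.choose d : ℚ)) := by
                  apply mul_le_mul_of_nonneg_right hAB
                  positivity
                calc _ ≤ 6*((K:ℚ)-(d:ℚ)) * (((d:ℚ)+1) * (K.choose d : ℚ)) := h6
                  _ ≤ _ := by linarith [h7]
              have hdpos : (0:ℚ) < (d:ℚ)+1 := by positivity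
              exact le_of_mul_le_mul_left hstep hdpos
            -- put together
            have hwN : (0:ℚ) ≤ w d * N (m-d) (K-d-1) := mul_nonneg (w_nonneg d) p1
            have h2p : (0:ℚ) ≤ (2:ℚ)^(d-1) := by positivity
            calc (2:ℚ)^(d+1-1) * ((K.choose (d+1):ℚ) * ((2*(d:ℚ)+1) * w d) * N (m-d) (K-d-1))
                = (2:ℚ)^(d-1) * ((2*(2*(d:ℚ)+1)*(K.choose (d+1):ℚ)) * (w d * N (m-d) (K-d-1))) := by
                  rw [show d+1-1 = d from by omega, show d = (d-1)+1 from by omega]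
                  rw [pow_succ]
                  rw [show (d-1)+1-1 = d-1 from by omega]
                  ring
              _ ≤ (2:ℚ)^(d-1) * (((K.choose d:ℚ) * (((m:ℚ)+(K:ℚ)-2*(d:ℚ)-2) * (2*(m:ℚ)+2*(K:ℚ)-4*(d:ℚ)-5))) * (w d * N (m-d) (K-d-1))) := by
                  apply mul_le_mul_of_nonneg_left _ h2p
                  exact mul_le_mul_of_nonneg_right harith hwN
              _ = (2:ℚ)^(d-1) * ((K.choose d:ℚ) * w d * (((m:ℚ)+(K:ℚ)-2*(d:ℚ)-2) * ((2*(m:ℚ)+2*(K:ℚ)-4*(d:ℚ)-5) * N (m-d) (K-d-1)))) := by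
                  ring
              _ ≤ (2:ℚ)^(d-1) * ((K.choose d:ℚ) * w d * N (m+1-d) (K-d)) := by
                  apply mul_le_mul_of_nonneg_left _ h2p
                  apply mul_le_mul_of_nonneg_left hN1
                  exact mul_nonneg (Nat.cast_nonneg _) (w_nonneg d)
              _ ≤ (K:ℚ) * N m (K-1) := ihd'
        -- sum bound
        have hNK1 : (0:ℚ) ≤ N m (K-1) := (ih (K-1) (by omega)).1 m (by omega)
        have hFb : ∑ d ∈ Finset.Icc 2 K, (K.choose d : ℚ) * w d * N (m+1-d) (K-d)
            ≤ (K:ℚ) * N m (K-1) := by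
          calc ∑ d ∈ Finset.Icc 2 K, (K.choose d : ℚ) * w d * N (m+1-d) (K-d)
              ≤ ∑ d ∈ Finset.Icc 2 K, ((1:ℚ)/2)^(d-1) * ((K:ℚ) * N m (K-1)) := by
                apply Finset.sum_le_sum
                intro d hd
                obtain ⟨hd2, hdK⟩ := Finset.mem_Icc.mp hd
                have h := hCH d (by omega) hdK
                have hpow : ((1:ℚ)/2)^(d-1) * (2:ℚ)^(d-1) = 1 := by
                  rw [← mul_pow]; norm_num
                calc (K.choose d : ℚ) * w d * N (m+1-d) (K-d)
                    = ((1:ℚ)/2)^(d-1) * ((2:ℚ)^(d-1) * ((K.choose d : ℚ) * w d * N (m+1-d) (K-d))) := by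
                      rw [← mul_assoc, hpow, one_mul]
                  _ ≤ ((1:ℚ)/2)^(d-1) * ((K:ℚ) * N m (K-1)) := by
                      apply mul_le_mul_of_nonneg_left h (by positivity)
            _ = (∑ d ∈ Finset.Icc 2 K, ((1:ℚ)/2)^(d-1)) * ((K:ℚ) * N m (K-1)) := by
                rw [Finset.sum_mul]
            _ ≤ 1 * ((K:ℚ) * N m (K-1)) := by
                apply mul_le_mul_of_nonneg_right (geo_bound K)
                exact mul_nonneg (Nat.cast_nonneg _) hNK1
            _ = (K:ℚ) * N m (K-1) := by ring
        have hID3 := ID3 K m (by omega) (by omega)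
        have hsp := S_split K m hKpos
        linarith [hID3, hsp, hFb]
      have hC : ∀ m, K+2 ≤ m → ((m:ℚ)+(K:ℚ)-2) * N m K ≤ N m (K+1) := by
        intro m hm
        have hID3m := ID3 K m (by omega) (by omega)
        have hID2 := ID2' K m hKpos (by omega) hID3m
        have hssub := S_sub K m (by omega)
        have hrest : 0 ≤ ∑ d ∈ Finset.Icc 1 K, (K.choose d:ℚ)*w d*N (m-d) (K-d) := by
          apply Finset.sum_nonneg
          intro d hd
          obtain ⟨hd1, hdK⟩ := Finset.mem_Icc.mp hd
          have hp := (ih (K-d) (by omega)).1 (m-d) (by omega)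
          exact mul_nonneg (mul_nonneg (Nat.cast_nonneg _) (w_nonneg d)) hp
        have hBm := hB m hm
        linarith [hID2, hssub, hrest, hBm]
      exact ⟨hP, hB, hC⟩

/-- `oneGNk n k` is the number of one-component galled networks with `n` leaves and `k`
reticulation nodes: `1GN(n,k) = C(n,k) * N(n+1,k)`. -/
def oneGNk (n k : ℕ) : ℚ := (n.choose k : ℚ) * N (n + 1) k

/-- For `n ≥ 2` and `0 ≤ k ≤ n`, `1GN(n,k) ≤ C(n,k) ((n+k-2)!/(2n-2)!) · 1GN(n,n)`. -/
theorem oneGNk_upper_bound (n k : ℕ) (hn : 2 ≤ n) (hk : k ≤ n) :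
    oneGNk n k ≤
      (n.choose k : ℚ) * (((n + k - 2).factorial : ℚ) / ((2 * n - 2).factorial : ℚ)) *
        oneGNk n n := by
  have hkey : ∀ j, j ≤ n →
      N (n+1) (n-j) * (((2*n-2).factorial : ℚ)) ≤ ((n+(n-j)-2).factorial : ℚ) * N (n+1) n := by
    intro j
    induction j with
    | zero =>
      intro _
      rw [Nat.sub_zero, show n+n-2 = 2*n-2 from by omega]
      apply le_of_eq
      ring
    | succ j ihj =>
      intro hj1
      have ihj' := ihj (by omega)
      have e1 : n-j = (n-(j+1))+1 := by omega
      have hcol := (NPC (n-(j+1))).2.2 (n+1) (by omega)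
      rw [← e1] at hcol
      have hfacs : (n+(n-j)-2) = (n+(n-(j+1))-2)+1 := by omega
      rw [hfacs, Nat.factorial_succ] at ihj'
      have hcc : (((n+(n-(j+1))-2)+1 : ℕ):ℚ) = ((n+1:ℕ):ℚ)+((n-(j+1):ℕ):ℚ)-2 := by
        have h2 : 2 ≤ n+(n-(j+1)) := by omega
        push_cast [h2]
        ring
      push_cast at ihj'
      have hFpos : (0:ℚ) ≤ (((2*n-2).factorial : ℕ) : ℚ) := Nat.cast_nonneg _
      have hcpos : (0:ℚ) < ((n+1:ℕ):ℚ)+((n-(j+1):ℕ):ℚ)-2 := by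
        have h1 : (2:ℚ) ≤ ((n:ℕ):ℚ) := by exact_mod_cast hn
        have h2 : (0:ℚ) ≤ ((n-(j+1):ℕ):ℚ) := Nat.cast_nonneg _
        push_cast
        linarith
      have step1 : (((n+1:ℕ):ℚ)+((n-(j+1):ℕ):ℚ)-2) * (N (n+1) (n-(j+1)) * (((2*n-2).factorial : ℕ):ℚ))
          ≤ N (n+1) (n-j) * (((2*n-2).factorial : ℕ):ℚ) := by
        calc (((n+1:ℕ):ℚ)+((n-(j+1):ℕ):ℚ)-2) * (N (n+1) (n-(j+1)) * (((2*n-2).factorial : ℕ):ℚ))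
            = ((((n+1:ℕ):ℚ)+((n-(j+1):ℕ):ℚ)-2) * N (n+1) (n-(j+1))) * (((2*n-2).factorial : ℕ):ℚ) := by
              ring
          _ ≤ N (n+1) (n-j) * (((2*n-2).factorial : ℕ):ℚ) :=
              mul_le_mul_of_nonneg_right hcol hFpos
      have step2 : N (n+1) (n-j) * (((2*n-2).factorial : ℕ):ℚ)
          ≤ ((((n+(n-(j+1))-2)+1 : ℕ)):ℚ) * (((n+(n-(j+1))-2).factorial : ℕ):ℚ) * N (n+1) n := by
        push_cast
        linarith [ihj']
      have hcomb : (((n+1:ℕ):ℚ)+((n-(j+1):ℕ):ℚ)-2) * (N (n+1) (n-(j+1)) * (((2*n-2).factorial : ℕ):ℚ))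
          ≤ (((n+1:ℕ):ℚ)+((n-(j+1):ℕ):ℚ)-2) * ((((n+(n-(j+1))-2).factorial : ℕ):ℚ) * N (n+1) n) := by
        calc (((n+1:ℕ):ℚ)+((n-(j+1):ℕ):ℚ)-2) * (N (n+1) (n-(j+1)) * (((2*n-2).factorial : ℕ):ℚ))
            ≤ N (n+1) (n-j) * (((2*n-2).factorial : ℕ):ℚ) := step1
          _ ≤ ((((n+(n-(j+1))-2)+1 : ℕ)):ℚ) * (((n+(n-(j+1))-2).factorial : ℕ):ℚ) * N (n+1) n := step2
          _ = (((n+1:ℕ):ℚ)+((n-(j+1):ℕ):ℚ)-2) * ((((n+(n-(j+1))-2).factorial : ℕ):ℚ) * N (n+1) n) := by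
              rw [hcc]; ring
      exact le_of_mul_le_mul_left hcomb hcpos
  have h1 : N (n+1) k * (((2*n-2).factorial : ℕ):ℚ) ≤ (((n+k-2).factorial : ℕ):ℚ) * N (n+1) n := by
    have := hkey (n-k) (by omega)
    rw [show n-(n-k) = k from by omega] at this
    exact this
  have hfac : (0:ℚ) < (((2*n-2).factorial : ℕ) : ℚ) := by exact_mod_cast Nat.factorial_pos _
  have h2 : N (n+1) k ≤ (((n+k-2).factorial : ℕ):ℚ) / (((2*n-2).factorial : ℕ):ℚ) * N (n+1) n := by
    rw [div_mul_eq_mul_div, le_div_iff₀ hfac]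
    linarith [h1]
  rw [oneGNk, oneGNk, Nat.choose_self]
  calc (n.choose k : ℚ) * N (n+1) k
      ≤ (n.choose k : ℚ) * ((((n+k-2).factorial : ℕ):ℚ) / (((2*n-2).factorial : ℕ):ℚ) * N (n+1) n) :=
        mul_le_mul_of_nonneg_left h2 (Nat.cast_nonneg _)
    _ = (n.choose k : ℚ) * (((n + k - 2).factorial : ℚ) / ((2 * n - 2).factorial : ℚ)) *
        ((1:ℕ) * N (n+1) n) := by push_cast; ring
end

section
/- For all integers n ≥ 2 and 0 ≤ k ≤ n, one has C(n,k)·B(n+1,k) = ∑_{ℓ=0}^{k} C(n−ℓ,k−ℓ)·C(n,ℓ)·N(n+1,ℓ). (In the paper's terms: the number DU(n,k) of dup-trees with n distinct labels exactly k of which are repeated equals ∑_{ℓ=0}^{k} C(n−ℓ,k−ℓ)·1GN(n,ℓ), where 1GN(n,ℓ) counts twin-cherry-free dup-trees with n distinct labels exactly ℓ of which are repeated.) -/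
/-- `B n k` counts dup-trees, defined by the initial values `B(n,0) = (2n-5)!!`,
`B(n,1) = (n-1)(2n-5)!!` and the Gunawan--Rathin--Zhang recurrence for dup-trees. -/
def B : ℕ → ℕ → ℚ
  | n, 0 => ddf (2 * n - 5)
  | n, 1 => ((n : ℚ) - 1) * ddf (2 * n - 5)
  | n, k + 2 =>
      ((n : ℚ) + (k + 2) - 2) * B n (k + 1)
        + (1 / 2) * ∑ d ∈ Finset.Icc 1 (k + 1),
            (((k + 1).choose d : ℚ)) * ddf (2 * d - 1) *
              (B (n - d) (k + 1 - d) - B (n - d + 1) (k + 1 - d))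
  termination_by n k => k
  decreasing_by all_goals omega

open Finset

def T (n k : ℕ) : ℚ := ∑ ℓ ∈ range (k + 1), (k.choose ℓ : ℚ) * N n ℓ

lemma N_succ (n i : ℕ) :
    N n (i + 1) = ((n : ℚ) + i - 2) * N n i + (i : ℚ) * N n (i - 1)
      + (1 / 2) * ∑ d ∈ Finset.Icc 1 i,
          (i.choose d : ℚ) * ddf (2 * d - 1) * (N (n - d) (i - d) - N (n - d + 1) (i - d)) := by
  match i with
  | 0 =>
    simp [N]
  | m + 1 =>
    rw [show m + 1 + 1 = m + 2 from rfl, N]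
    push_cast
    ring_nf

lemma shiftT (n k : ℕ) :
    T n (k + 1) = T n k + ∑ i ∈ range (k + 1), (k.choose i : ℚ) * N n (i + 1) := by
  have h1 : T n (k + 1)
      = (∑ i ∈ range (k + 1), ((k + 1).choose (i + 1) : ℚ) * N n (i + 1))
        + ((k + 1).choose 0 : ℚ) * N n 0 :=
    Finset.sum_range_succ' _ (k + 1)
  have h2 : ∀ i ∈ range (k + 1), (((k + 1).choose (i + 1) : ℚ)) * N n (i + 1)
      = (k.choose i : ℚ) * N n (i + 1) + (k.choose (i + 1) : ℚ) * N n (i + 1) := by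
    intro i _
    rw [Nat.choose_succ_succ]
    push_cast
    ring
  have h3 : T n k = (∑ i ∈ range k, (k.choose (i + 1) : ℚ) * N n (i + 1))
      + (k.choose 0 : ℚ) * N n 0 :=
    Finset.sum_range_succ' _ k
  rw [h1, Finset.sum_congr rfl h2, Finset.sum_add_distrib,
    Finset.sum_range_succ (fun i => (k.choose (i + 1) : ℚ) * N n (i + 1)) k]
  simp only [Nat.choose_succ_self, Nat.cast_zero, zero_mul, add_zero, Nat.choose_zero_right,
    Nat.cast_one, one_mul]
  rw [h3]
  simp only [Nat.choose_zero_right, Nat.cast_one, one_mul]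
  ring

lemma Wlem (x : ℕ → ℚ) (k : ℕ) :
    ∑ i ∈ range (k + 2), (i : ℚ) * ((k + 1).choose i : ℚ) * x i
      = ((k : ℚ) + 1) * ∑ m ∈ range (k + 1), (k.choose m : ℚ) * x (m + 1) := by
  rw [Finset.sum_range_succ' (fun i => (i : ℚ) * ((k + 1).choose i : ℚ) * x i) (k + 1)]
  simp only [Nat.cast_zero, zero_mul, add_zero]
  rw [Finset.mul_sum]
  refine Finset.sum_congr rfl fun m _ => ?_
  have h : ((k + 1) * k.choose m : ℕ) = ((k + 1).choose (m + 1) * (m + 1) : ℕ) :=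
    Nat.add_one_mul_choose_eq k m
  have h' : ((k : ℚ) + 1) * (k.choose m : ℚ) = ((k + 1).choose (m + 1) : ℚ) * ((m : ℚ) + 1) := by
    exact_mod_cast h
  push_cast
  linear_combination (-(x (m + 1))) * h'

lemma convT (n k : ℕ) :
    ∑ i ∈ range (k + 1), (k.choose i : ℚ) *
        ∑ d ∈ Finset.Icc 1 i,
          (i.choose d : ℚ) * ddf (2 * d - 1) * (N (n - d) (i - d) - N (n - d + 1) (i - d))
      = ∑ d ∈ Finset.Icc 1 k,
          (k.choose d : ℚ) * ddf (2 * d - 1) * (T (n - d) (k - d) - T (n - d + 1) (k - d)) := by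
  -- LHS as a double sum over Ico
  have e0 : ∀ i, (k.choose i : ℚ) *
        ∑ d ∈ Finset.Icc 1 i,
          (i.choose d : ℚ) * ddf (2 * d - 1) * (N (n - d) (i - d) - N (n - d + 1) (i - d))
      = ∑ d ∈ Finset.Ico 1 (i + 1),
          (k.choose i : ℚ) * ((i.choose d : ℚ) * ddf (2 * d - 1)
            * (N (n - d) (i - d) - N (n - d + 1) (i - d))) := by
    intro i
    rw [Finset.mul_sum, ← Finset.Ico_add_one_right_eq_Icc]
  calc
    ∑ i ∈ range (k + 1), (k.choose i : ℚ) *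
        ∑ d ∈ Finset.Icc 1 i,
          (i.choose d : ℚ) * ddf (2 * d - 1) * (N (n - d) (i - d) - N (n - d + 1) (i - d))
      = ∑ i ∈ Finset.Ico 0 (k + 1), ∑ d ∈ Finset.Ico 1 (i + 1),
          (k.choose i : ℚ) * ((i.choose d : ℚ) * ddf (2 * d - 1)
            * (N (n - d) (i - d) - N (n - d + 1) (i - d))) := by
        rw [Finset.range_eq_Ico]; exact Finset.sum_congr rfl fun i _ => e0 i
    _ = ∑ i ∈ Finset.Ico 1 (k + 1), ∑ d ∈ Finset.Ico 1 (i + 1),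
          (k.choose i : ℚ) * ((i.choose d : ℚ) * ddf (2 * d - 1)
            * (N (n - d) (i - d) - N (n - d + 1) (i - d))) := by
        rw [Finset.sum_eq_sum_Ico_succ_bot (by omega : 0 < k + 1)]
        simp
    _ = ∑ d ∈ Finset.Ico 1 (k + 1), ∑ i ∈ Finset.Ico d (k + 1),
          (k.choose i : ℚ) * ((i.choose d : ℚ) * ddf (2 * d - 1)
            * (N (n - d) (i - d) - N (n - d + 1) (i - d))) := by
        rw [← Finset.sum_Ico_Ico_comm]
    _ = ∑ d ∈ Finset.Icc 1 k,
          (k.choose d : ℚ) * ddf (2 * d - 1) * (T (n - d) (k - d) - T (n - d + 1) (k - d)) := by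
        rw [← Finset.Ico_add_one_right_eq_Icc]
        refine Finset.sum_congr rfl fun d hd => ?_
        have hd1 : 1 ≤ d := (Finset.mem_Ico.mp hd).1
        have hdk : d ≤ k := by have := (Finset.mem_Ico.mp hd).2; omega
        rw [Finset.sum_Ico_eq_sum_range]
        have hlen : k + 1 - d = (k - d) + 1 := by omega
        rw [hlen]
        have hterm : ∀ s ∈ range ((k - d) + 1),
            (k.choose (d + s) : ℚ) * (((d + s).choose d : ℚ) * ddf (2 * d - 1)
              * (N (n - d) ((d + s) - d) - N (n - d + 1) ((d + s) - d)))
            = (k.choose d : ℚ) * ddf (2 * d - 1)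
                * (((k - d).choose s : ℚ) * N (n - d) s
                    - ((k - d).choose s : ℚ) * N (n - d + 1) s) := by
          intro s hs
          have hsk : d + s ≤ k := by
            have := Finset.mem_range.mp hs; omega
          have hcm : k.choose (d + s) * (d + s).choose d
              = k.choose d * (k - d).choose s := by
            have := Nat.choose_mul (n := k) (Nat.le_add_right d s)
            simpa [Nat.add_sub_cancel_left] using this
          have hcm' : (k.choose (d + s) : ℚ) * ((d + s).choose d : ℚ)
              = (k.choose d : ℚ) * ((k - d).choose s : ℚ) := by exact_mod_cast hcm
          rw [Nat.add_sub_cancel_left]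
          linear_combination (ddf (2 * d - 1) * (N (n - d) s - N (n - d + 1) s)) * hcm'
        rw [Finset.sum_congr rfl hterm]
        unfold T
        rw [← Finset.sum_sub_distrib, Finset.mul_sum]

lemma T_rec (n k : ℕ) :
    T n (k + 1) = ((n : ℚ) + k - 1) * T n k
      + (1 / 2) * ∑ d ∈ Finset.Icc 1 k,
          (k.choose d : ℚ) * ddf (2 * d - 1) * (T (n - d) (k - d) - T (n - d + 1) (k - d)) := by
  match k with
  | 0 =>
    simp [T, N, Finset.sum_range_succ]
    ring
  | K + 1 =>
    rw [shiftT n (K + 1)]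
    have hpt : ∀ i ∈ range (K + 2), ((K + 1).choose i : ℚ) * N n (i + 1)
        = ((n : ℚ) - 2) * (((K + 1).choose i : ℚ) * N n i)
          + (i : ℚ) * ((K + 1).choose i : ℚ) * N n i
          + (i : ℚ) * ((K + 1).choose i : ℚ) * N n (i - 1)
          + (1 / 2) * (((K + 1).choose i : ℚ) * ∑ d ∈ Finset.Icc 1 i,
              (i.choose d : ℚ) * ddf (2 * d - 1)
                * (N (n - d) (i - d) - N (n - d + 1) (i - d))) := by
      intro i _
      rw [N_succ]
      ring
    rw [Finset.sum_congr rfl hpt]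
    rw [Finset.sum_add_distrib, Finset.sum_add_distrib, Finset.sum_add_distrib,
      ← Finset.mul_sum, ← Finset.mul_sum,
      Wlem (fun i => N n i) K, Wlem (fun i => N n (i - 1)) K]
    simp only [Nat.add_sub_cancel]
    rw [convT n (K + 1)]
    have hT2 : (∑ i ∈ range (K + 2), ((K + 1).choose i : ℚ) * N n i) = T n (K + 1) := rfl
    have hT1 : (∑ m ∈ range (K + 1), (K.choose m : ℚ) * N n m) = T n K := rfl
    have eA : (∑ m ∈ range (K + 1), (K.choose m : ℚ) * N n (m + 1)) = T n (K + 1) - T n K := by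
      have := shiftT n K; linarith
    rw [hT2, hT1, eA]
    push_cast
    ring



lemma B_succ (n k : ℕ) :
    B n (k + 1) = ((n : ℚ) + k - 1) * B n k
      + (1 / 2) * ∑ d ∈ Finset.Icc 1 k,
          (k.choose d : ℚ) * ddf (2 * d - 1) * (B (n - d) (k - d) - B (n - d + 1) (k - d)) := by
  match k with
  | 0 => simp [B]
  | m + 1 =>
    rw [show m + 1 + 1 = m + 2 from rfl, B]
    push_cast
    ring_nf

lemma B_eq_T : ∀ k n, B n k = T n k := by
  intro k
  induction k using Nat.strong_induction_on with
  | _ k ih =>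
    intro n
    match k, ih with
    | 0, _ => simp [B, T, N]
    | k + 1, ih =>
      rw [B_succ n k, T_rec n k, ih k (by omega)]
      congr 2
      refine Finset.sum_congr rfl fun d _ => ?_
      have h1 := ih (k - d) (by omega)
      rw [h1, h1]


/-- `DU(n,k) = C(n,k) B(n+1,k)` equals `∑_{ℓ=0}^{k} C(n-ℓ,k-ℓ) · C(n,ℓ) N(n+1,ℓ)`:
dup-trees with `n` distinct labels, `k` repeated, in terms of twin-cherry free dup-trees. -/
theorem DU_eq_sum_oneGN (n k : ℕ) (hn : 2 ≤ n) (hk : k ≤ n) :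
    (n.choose k : ℚ) * B (n + 1) k =
      ∑ ℓ ∈ Finset.range (k + 1),
        ((n - ℓ).choose (k - ℓ) : ℚ) * ((n.choose ℓ : ℚ) * N (n + 1) ℓ) := by
  have hiden : ∀ ℓ ∈ Finset.range (k + 1),
      ((n - ℓ).choose (k - ℓ) : ℚ) * ((n.choose ℓ : ℚ) * N (n + 1) ℓ)
        = (n.choose k : ℚ) * ((k.choose ℓ : ℚ) * N (n + 1) ℓ) := by
    intro ℓ hℓ
    have hℓk : ℓ ≤ k := by
      have := Finset.mem_range.mp hℓ; omega
    have h := Nat.choose_mul (n := n) hℓk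
    have h' : (n.choose k : ℚ) * (k.choose ℓ : ℚ)
        = (n.choose ℓ : ℚ) * ((n - ℓ).choose (k - ℓ) : ℚ) := by exact_mod_cast h
    linear_combination (-(N (n + 1) ℓ)) * h'
  rw [Finset.sum_congr rfl hiden, ← Finset.mul_sum, B_eq_T k (n + 1)]
  rfl
end
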